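/- arXiv:2402.02312 — 5 statements merged into one kernel-verified Lean document; each statement's English description precedes it below -/
import Mathlib

section
/- Let G be a finite group, p a prime with p^e the exact power of p dividing |G|, and let g₁, g₂ ∈ G. If χ(g₁) ≡ χ(g₂) (mod p^(e+1)) for every integer-valued character χ of G induced from the trivial character of a cyclic subgroup, then g₂ is conjugate in G to an element of the cyclic subgroup generated by g₁ but not conjugate to any element of ⟨g₁^p⟩ when p divides the order of g₁. -/
open Finset Subgroup ArithmeticFunction


/-- The value at `x` of the character of `G` induced from the trivial character of a
subgroup `H`, computed as `|{k ∈ G : k x k⁻¹ ∈ H}| / |H|` (the division is exact). -/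
noncomputable def indTrivVal {G : Type*} [Group G] (H : Subgroup G) (x : G) : ℕ :=
  Nat.card {k : G // k * x * k⁻¹ ∈ H} / Nat.card H


section Aux

variable {G : Type*} [Group G]

lemma isCyclic_zpowers (a : G) : IsCyclic (Subgroup.zpowers a) := by
  refine ⟨⟨⟨a, Subgroup.mem_zpowers a⟩, ?_⟩⟩
  rintro ⟨x, hx⟩
  obtain ⟨m, rfl⟩ := Subgroup.mem_zpowers_iff.mp hx
  exact ⟨m, by ext; simp⟩

lemma card_dvd_card_conjset (K : Subgroup G) (g : G) :
    Nat.card K ∣ Nat.card {k : G // k * g * k⁻¹ ∈ K} := by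
  classical
  have e1 : {k : G // k * g * k⁻¹ ∈ K} ≃ {k : G // k⁻¹ * g * k ∈ K} :=
    { toFun := fun x => ⟨x.1⁻¹, by simpa using x.2⟩
      invFun := fun x => ⟨x.1⁻¹, by simpa using x.2⟩
      left_inv := fun x => by simp
      right_inv := fun x => by simp }
  set S : Set G := {k : G | k⁻¹ * g * k ∈ K} with hSdef
  set T : Set (G ⧸ K) := (QuotientGroup.mk : G → G ⧸ K) '' S with hTdef
  have hS : S = (QuotientGroup.mk : G → G ⧸ K) ⁻¹' T := by
    ext x
    constructor
    · exact fun hx => Set.mem_preimage.mpr ⟨x, hx, rfl⟩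
    · rintro ⟨s, hs, hsx⟩
      have hu : s⁻¹ * x ∈ K := (QuotientGroup.eq (s := K)).mp hsx
      have : x⁻¹ * g * x = (s⁻¹ * x)⁻¹ * (s⁻¹ * g * s) * (s⁻¹ * x) := by group
      show x⁻¹ * g * x ∈ K
      rw [this]
      exact K.mul_mem (K.mul_mem (K.inv_mem hu) hs) hu
  have h2 : Nat.card S = Nat.card K * Nat.card T := by
    rw [hS]
    rw [Nat.card_congr (QuotientGroup.preimageMkEquivSubgroupProdSet K _)]
    exact Nat.card_prod _ _
  rw [Nat.card_congr e1]
  exact ⟨_, h2⟩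

lemma card_mul_indTrivVal (K : Subgroup G) (g : G) :
    (indTrivVal K g) * Nat.card K = Nat.card {k : G // k * g * k⁻¹ ∈ K} :=
  Nat.div_mul_cancel (card_dvd_card_conjset K g)

end Aux

section Aux2

variable {G : Type*} [Group G]

lemma mem_zpowers_pow_iff' (g : G) {d : ℕ} (hd : d ∣ orderOf g) (hn0 : orderOf g ≠ 0) (x : G) :
    x ∈ zpowers (g ^ (orderOf g / d)) ↔ x ∈ zpowers g ∧ orderOf x ∣ d := by
  have hd0 : d ≠ 0 := fun h => hn0 (by simpa [h] using hd)
  set n := orderOf g with hn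
  constructor
  · rintro ⟨j, rfl⟩
    refine ⟨⟨(n / d : ℕ) * j, by
      show g ^ (((n / d : ℕ) : ℤ) * j) = (g ^ (n / d)) ^ j
      rw [zpow_mul, zpow_natCast]⟩, ?_⟩
    rw [orderOf_dvd_iff_pow_eq_one]
    have h1 : (g ^ (n / d)) ^ d = 1 := by
      rw [← pow_mul, Nat.div_mul_cancel hd, pow_orderOf_eq_one]
    show ((g ^ (n / d)) ^ j) ^ d = 1
    rw [← zpow_natCast ((g ^ (n / d)) ^ j) d, ← zpow_mul, mul_comm, zpow_mul, zpow_natCast, h1,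
      one_zpow]
  · rintro ⟨⟨i, rfl⟩, hord⟩
    have h1 : g ^ (i * d) = 1 := by
      rw [zpow_mul, zpow_natCast]
      exact orderOf_dvd_iff_pow_eq_one.mp hord
    have h2 : (n : ℤ) ∣ i * d := orderOf_dvd_iff_zpow_eq_one.mpr h1
    have h3 : ((n / d : ℕ) : ℤ) * (d : ℤ) ∣ i * d := by
      rwa [← Int.natCast_mul, Nat.div_mul_cancel hd]
    have h4 : ((n / d : ℕ) : ℤ) ∣ i :=
      (mul_dvd_mul_iff_right (by exact_mod_cast hd0 : (d : ℤ) ≠ 0)).mp h3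
    obtain ⟨j, rfl⟩ := h4
    exact ⟨j, by
      show (g ^ (n / d)) ^ j = g ^ (((n / d : ℕ) : ℤ) * j)
      rw [← zpow_natCast g, ← zpow_mul]⟩

lemma card_zpowers_pow (g : G) {d : ℕ} (hd : d ∣ orderOf g) (hn0 : orderOf g ≠ 0) :
    Nat.card (zpowers (g ^ (orderOf g / d))) = d := by
  have hnd0 : orderOf g / d ≠ 0 :=
    Nat.div_ne_zero_iff_of_dvd hd |>.mpr ⟨hn0, fun h => hn0 (by simpa [h] using hd)⟩
  rw [Nat.card_zpowers, orderOf_pow' g hnd0, Nat.gcd_eq_right (Nat.div_dvd_of_dvd hd),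
    Nat.div_div_self hd hn0]

end Aux2

lemma moebius_indicator {m n : ℕ} (hm : m ∣ n) (hn : n ≠ 0) :
    ∑ d ∈ n.divisors, (if m ∣ d then (moebius (n / d) : ℤ) else 0)
      = if m = n then 1 else 0 := by
  have hm0 : m ≠ 0 := fun h => hn (by simpa [h] using hm)
  rw [← Finset.sum_filter]
  have hbij : ∑ d ∈ n.divisors.filter (m ∣ ·), (moebius (n / d) : ℤ)
      = ∑ e ∈ (n / m).divisors, (moebius ((n / m) / e) : ℤ) := by
    refine (Finset.sum_nbij' (fun d => d / m) (fun e => m * e) ?_ ?_ ?_ ?_ ?_).symm.symm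
    · intro d hd
      simp only [Finset.mem_filter, Nat.mem_divisors] at hd
      obtain ⟨⟨hdn, _⟩, hmd⟩ := hd
      have hnm0 : n / m ≠ 0 := by
        intro h
        have h2 := Nat.mul_div_cancel' hm
        rw [h, mul_zero] at h2
        exact hn h2.symm
      refine Nat.mem_divisors.mpr ⟨?_, hnm0⟩
      obtain ⟨d', rfl⟩ := hmd
      show m * d' / m ∣ n / m
      rw [Nat.mul_div_cancel_left _ (Nat.pos_of_ne_zero hm0)]
      have h3 : m * d' ∣ m * (n / m) := by rw [Nat.mul_div_cancel' hm]; exact hdn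
      exact (Nat.mul_dvd_mul_iff_left (Nat.pos_of_ne_zero hm0)).mp h3
    · intro e he
      simp only [Nat.mem_divisors] at he
      refine Finset.mem_filter.mpr ⟨Nat.mem_divisors.mpr ⟨?_, hn⟩, Dvd.intro e rfl⟩
      calc m * e ∣ m * (n / m) := mul_dvd_mul_left m he.1
        _ = n := Nat.mul_div_cancel' hm
    · intro d hd
      simp only [Finset.mem_filter] at hd
      exact Nat.mul_div_cancel' hd.2
    · intro e he
      exact Nat.mul_div_cancel_left e (Nat.pos_of_ne_zero hm0)
    · intro d hd
      simp only [Finset.mem_filter] at hd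
      congr 1
      rw [Nat.div_div_eq_div_mul, Nat.mul_div_cancel' hd.2]
  rw [hbij, Nat.sum_div_divisors]
  have h1 : ∑ e ∈ (n / m).divisors, (moebius e : ℤ) = if n / m = 1 then 1 else 0 :=
    calc ∑ e ∈ (n / m).divisors, (moebius e : ℤ)
        = (moebius * (zeta : ArithmeticFunction ℕ) : ArithmeticFunction ℤ) (n / m) :=
          coe_mul_zeta_apply.symm
      _ = (1 : ArithmeticFunction ℤ) (n / m) := by rw [moebius_mul_coe_zeta]
      _ = if n / m = 1 then 1 else 0 := one_apply
  rw [h1]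
  congr 1
  · simp only [eq_iff_iff]
    constructor
    · intro h
      have h2 := Nat.mul_div_cancel' hm
      rw [h, mul_one] at h2
      exact h2
    · rintro rfl
      exact Nat.div_self (Nat.pos_of_ne_zero hn)

section Key

variable {G : Type*} [Group G] [Fintype G]

lemma key_sum (g₁ g : G) :
    ∑ d ∈ (orderOf g₁).divisors,
        ((moebius (orderOf g₁ / d) : ℤ) *
          (d * (indTrivVal (zpowers (g₁ ^ (orderOf g₁ / d))) g : ℤ)))
      = (Nat.card {k : G // k * g * k⁻¹ ∈ zpowers g₁ ∧
          orderOf (k * g * k⁻¹) = orderOf g₁} : ℤ) := by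
  classical
  set n := orderOf g₁ with hn
  have hn0 : n ≠ 0 := (orderOf_pos g₁).ne'
  have hstep : ∀ d ∈ n.divisors,
      (moebius (n / d) : ℤ) * (d * (indTrivVal (zpowers (g₁ ^ (n / d))) g : ℤ))
        = ∑ k : G, (if k * g * k⁻¹ ∈ zpowers g₁ ∧ orderOf (k * g * k⁻¹) ∣ d
            then (moebius (n / d) : ℤ) else 0) := by
    intro d hd
    obtain ⟨hdn, -⟩ := Nat.mem_divisors.mp hd
    have hKc : ∀ x : G, x ∈ zpowers (g₁ ^ (n / d)) ↔ x ∈ zpowers g₁ ∧ orderOf x ∣ d :=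
      fun x => mem_zpowers_pow_iff' g₁ hdn hn0 x
    have h1 : (d : ℤ) * (indTrivVal (zpowers (g₁ ^ (n / d))) g : ℤ)
        = (Nat.card {k : G // k * g * k⁻¹ ∈ zpowers (g₁ ^ (n / d))} : ℤ) := by
      rw [← card_mul_indTrivVal (zpowers (g₁ ^ (n / d))) g, card_zpowers_pow g₁ hdn hn0]
      push_cast
      ring
    rw [h1]
    have h2 : Nat.card {k : G // k * g * k⁻¹ ∈ zpowers (g₁ ^ (n / d))}
        = ∑ k : G, (if k * g * k⁻¹ ∈ zpowers g₁ ∧ orderOf (k * g * k⁻¹) ∣ d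
            then 1 else 0) := by
      rw [Nat.card_eq_fintype_card, Fintype.card_subtype, Finset.card_filter]
      exact Finset.sum_congr rfl fun k _ => if_congr (hKc _) rfl rfl
    rw [h2]
    push_cast
    rw [Finset.mul_sum]
    exact Finset.sum_congr rfl fun k _ => by rw [mul_ite, mul_one, mul_zero]
  rw [Finset.sum_congr rfl hstep, Finset.sum_comm]
  have h3 : ∀ k : G,
      (∑ d ∈ n.divisors, if k * g * k⁻¹ ∈ zpowers g₁ ∧ orderOf (k * g * k⁻¹) ∣ d
          then (moebius (n / d) : ℤ) else 0)
        = if k * g * k⁻¹ ∈ zpowers g₁ ∧ orderOf (k * g * k⁻¹) = n then 1 else 0 := by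
    intro k
    by_cases hk : k * g * k⁻¹ ∈ zpowers g₁
    · have hmn : orderOf (k * g * k⁻¹) ∣ n := orderOf_dvd_of_mem_zpowers hk
      calc (∑ d ∈ n.divisors, if k * g * k⁻¹ ∈ zpowers g₁ ∧ orderOf (k * g * k⁻¹) ∣ d
              then (moebius (n / d) : ℤ) else 0)
          = ∑ d ∈ n.divisors, if orderOf (k * g * k⁻¹) ∣ d
              then (moebius (n / d) : ℤ) else 0 :=
            Finset.sum_congr rfl fun d _ => by simp [hk]
        _ = if orderOf (k * g * k⁻¹) = n then 1 else 0 := moebius_indicator hmn hn0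
        _ = if k * g * k⁻¹ ∈ zpowers g₁ ∧ orderOf (k * g * k⁻¹) = n then 1 else 0 := by
            simp [hk]
    · simp [hk]
  rw [Finset.sum_congr rfl fun k _ => h3 k]
  rw [Finset.sum_boole, Nat.card_eq_fintype_card, Fintype.card_subtype]

end Key

section Norm

variable {G : Type*} [Group G] [Fintype G]

lemma orderOf_conj' (k a : G) : orderOf (k * a * k⁻¹) = orderOf a := by
  have := orderOf_injective (MulAut.conj k).toMonoidHom (MulAut.conj k).injective a
  simpa using this

lemma norm_iff (g₁ k : G) :
    (k * g₁ * k⁻¹ ∈ zpowers g₁ ∧ orderOf (k * g₁ * k⁻¹) = orderOf g₁)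
      ↔ k ∈ (Subgroup.normalizer (zpowers g₁ : Set G)) := by
  constructor
  · rintro ⟨hmem, hord⟩
    have hle : zpowers (k * g₁ * k⁻¹) ≤ zpowers g₁ := zpowers_le.mpr hmem
    have hcard : Nat.card (zpowers g₁) ≤ Nat.card (zpowers (k * g₁ * k⁻¹)) := by
      rw [Nat.card_zpowers, Nat.card_zpowers, hord]
    have heq := Subgroup.eq_of_le_of_card_ge hle hcard
    have hmap : (zpowers g₁).map (MulAut.conj k).toMonoidHom = zpowers g₁ := by
      rw [MonoidHom.map_zpowers]
      simpa using heq
    refine Subgroup.mem_normalizer_iff.mpr fun h => ⟨fun hh => ?_, fun hh => ?_⟩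
    · rw [← hmap]
      exact ⟨h, hh, rfl⟩
    · rw [← hmap] at hh
      obtain ⟨h', hh', he⟩ := hh
      have : h' = h := by
        have : k * h' * k⁻¹ = k * h * k⁻¹ := by simpa using he
        exact mul_left_cancel (mul_right_cancel this)
      rwa [← this]
  · intro hk
    refine ⟨(Subgroup.mem_normalizer_iff.mp hk g₁).mp (mem_zpowers g₁), orderOf_conj' k g₁⟩

lemma card_eq_normalizer (g₁ : G) :
    Nat.card {k : G // k * g₁ * k⁻¹ ∈ zpowers g₁ ∧ orderOf (k * g₁ * k⁻¹) = orderOf g₁}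
      = Nat.card (Subgroup.normalizer (zpowers g₁ : Set G)) :=
  Nat.card_congr (Equiv.subtypeEquivRight fun k => norm_iff g₁ k)

end Norm


/-- Let `p^e` be the exact power of `p` dividing `|G|`.  If
`χ(g₁) ≡ χ(g₂) (mod p^(e+1))` for every character `χ` of `G` induced from the trivial
character of a cyclic subgroup, then `g₂` is conjugate to an element of `⟨g₁⟩`, and,
when `p` divides the order of `g₁`, `g₂` is not conjugate to any element of `⟨g₁^p⟩`. -/
theorem stmt_4 (G : Type*) [Group G] [Fintype G] (p e : ℕ) (hp : p.Prime)
    (he : (Nat.card G).factorization p = e) (g₁ g₂ : G)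
    (hcong : ∀ H : Subgroup G, IsCyclic H →
      (p : ℤ) ^ (e + 1) ∣ (indTrivVal H g₁ : ℤ) - (indTrivVal H g₂ : ℤ)) :
    (∃ x ∈ Subgroup.zpowers g₁, IsConj x g₂) ∧
    (p ∣ orderOf g₁ → ∀ x ∈ Subgroup.zpowers (g₁ ^ p), ¬ IsConj x g₂) := by
  classical
  have hn0 : orderOf g₁ ≠ 0 := (orderOf_pos g₁).ne'
  have hdvd : (p : ℤ) ^ (e + 1) ∣
      (Nat.card {k : G // k * g₁ * k⁻¹ ∈ zpowers g₁ ∧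
          orderOf (k * g₁ * k⁻¹) = orderOf g₁} : ℤ) -
      (Nat.card {k : G // k * g₂ * k⁻¹ ∈ zpowers g₁ ∧
          orderOf (k * g₂ * k⁻¹) = orderOf g₁} : ℤ) := by
    rw [← key_sum g₁ g₁, ← key_sum g₁ g₂, ← Finset.sum_sub_distrib]
    apply Finset.dvd_sum
    intro d _
    have h := hcong (zpowers (g₁ ^ (orderOf g₁ / d))) (_root_.isCyclic_zpowers _)
    have heq : (moebius (orderOf g₁ / d) : ℤ) *
          (d * (indTrivVal (zpowers (g₁ ^ (orderOf g₁ / d))) g₁ : ℤ)) -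
        (moebius (orderOf g₁ / d) : ℤ) *
          (d * (indTrivVal (zpowers (g₁ ^ (orderOf g₁ / d))) g₂ : ℤ))
        = ((moebius (orderOf g₁ / d) : ℤ) * d) *
          ((indTrivVal (zpowers (g₁ ^ (orderOf g₁ / d))) g₁ : ℤ) -
           (indTrivVal (zpowers (g₁ ^ (orderOf g₁ / d))) g₂ : ℤ)) := by ring
    rw [heq]
    exact Dvd.dvd.mul_left h _
  rw [card_eq_normalizer g₁] at hdvd
  have hnot : ¬ ((p : ℤ) ^ (e + 1) ∣ (Nat.card (Subgroup.normalizer (zpowers g₁ : Set G)) : ℤ)) := by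
    intro hcon
    have hc : p ^ (e + 1) ∣ Nat.card (Subgroup.normalizer (zpowers g₁ : Set G)) := by exact_mod_cast hcon
    have hG : p ^ (e + 1) ∣ Nat.card G :=
      hc.trans (Subgroup.card_subgroup_dvd_card _)
    rw [Nat.Prime.pow_dvd_iff_le_factorization hp Nat.card_pos.ne'] at hG
    omega
  have hpos : Nat.card {k : G // k * g₂ * k⁻¹ ∈ zpowers g₁ ∧
      orderOf (k * g₂ * k⁻¹) = orderOf g₁} ≠ 0 := by
    intro h0
    rw [h0] at hdvd
    simp only [Nat.cast_zero, sub_zero] at hdvd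
    exact hnot hdvd
  have hne : Nonempty {k : G // k * g₂ * k⁻¹ ∈ zpowers g₁ ∧
      orderOf (k * g₂ * k⁻¹) = orderOf g₁} := (Nat.card_ne_zero.mp hpos).1
  obtain ⟨⟨k, hk1, hk2⟩⟩ := hne
  have hog2 : orderOf g₂ = orderOf g₁ := by rw [← hk2, orderOf_conj']
  constructor
  · exact ⟨k * g₂ * k⁻¹, hk1, isConj_iff.mpr ⟨k⁻¹, by group⟩⟩
  · intro hpn x hx hconj
    have hx_ord : orderOf x ∣ orderOf g₁ / p := by
      have h1 : orderOf x ∣ orderOf (g₁ ^ p) := orderOf_dvd_of_mem_zpowers hx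
      rwa [orderOf_pow' g₁ hp.ne_zero, Nat.gcd_eq_right hpn] at h1
    have hx_eq : orderOf x = orderOf g₁ := by
      obtain ⟨c, hc⟩ := isConj_iff.mp hconj
      rw [← hog2, ← hc, orderOf_conj']
    have hdiv0 : orderOf g₁ / p ≠ 0 := by
      intro h
      have h2 := Nat.mul_div_cancel' hpn
      rw [h, mul_zero] at h2
      exact hn0 h2.symm
    have hle : orderOf g₁ ≤ orderOf g₁ / p :=
      Nat.le_of_dvd (Nat.pos_of_ne_zero hdiv0) (hx_eq ▸ hx_ord)
    have hlt : orderOf g₁ / p < orderOf g₁ :=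
      Nat.div_lt_self (Nat.pos_of_ne_zero hn0) hp.one_lt
    omega
end

section
/- Let σ, σ' ∈ S_n be permutations such that the cycle type of σ' is obtained from the cycle type of σ by replacing p^m cycles of length k with p^(m-1) cycles of length pk. Then there exist τ, ρ ∈ S_n with σ conjugate to ρ, τ commuting with ρ, τ of order a power of p, and σ' conjugate to ρ · τ^(p^(m-1)). -/
open Equiv Multiset

/-- The full cycle type of a permutation of `Fin n`: the cycle lengths including
fixed points as cycles of length 1. -/
def fullCycleType {n : ℕ} (σ : Equiv.Perm (Fin n)) : Multiset ℕ :=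
  σ.cycleType + Multiset.replicate (n - σ.cycleType.sum) 1


theorem Equiv.pow_addRight {α : Type*} [AddGroup α] (a : α) (n : ℕ) :
    Equiv.addRight a ^ n = Equiv.addRight (n • a) := by
  induction n with
  | zero => ext x; simp
  | succ n ih =>
    ext x
    rw [pow_succ, Equiv.Perm.mul_apply, ih]
    show x + a + n • a = x + (n + 1) • a
    rw [succ_nsmul', add_assoc]

lemma cycleType_of_free {α : Type*} [Fintype α] [DecidableEq α] (f : Equiv.Perm α) (ℓ : ℕ)
    (h2 : 2 ≤ ℓ) (hpow : f ^ ℓ = 1)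
    (hfree : ∀ (x : α) (i : ℕ), 0 < i → i < ℓ → (f ^ i) x ≠ x) :
    f.cycleType = Multiset.replicate (Fintype.card α / ℓ) ℓ := by
  classical
  have hℓ0 : 0 < ℓ := by omega
  have hfix : ∀ x, f x ≠ x := by
    intro x h
    exact hfree x 1 one_pos (by omega) (by simpa using h)
  have hall : ∀ c ∈ f.cycleFactorsFinset, (c : Equiv.Perm α).support.card = ℓ := by
    intro c hc
    have hcyc : c.IsCycle := (Equiv.Perm.mem_cycleFactorsFinset_iff.mp hc).1
    obtain ⟨x, hx, -⟩ := id hcyc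
    have hx' : x ∈ c.support := Equiv.Perm.mem_support.mpr hx
    have hceq : c = f.cycleOf x := Equiv.Perm.cycle_is_cycleOf hx' hc
    have hxs : x ∈ f.support := Equiv.Perm.mem_support.mpr (hfix x)
    have hpows : ∀ i : ℕ, (c ^ i) x = (f ^ i) x := by
      intro i; rw [hceq]; exact f.cycleOf_pow_apply_self x i
    -- c ^ ℓ = 1
    have hcl : c ^ ℓ = 1 := by
      ext y
      by_cases hy : y ∈ c.support
      · have hsc : f.SameCycle x y := by
          rw [hceq] at hy
          exact (Equiv.Perm.mem_support_cycleOf_iff.mp hy).1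
        have key : ∀ i : ℕ, (c ^ i) y = (f ^ i) y := by
          intro i
          induction i with
          | zero => simp
          | succ j ih =>
            have hsc' : f.SameCycle x ((f ^ j) y) :=
              hsc.trans ⟨(j : ℤ), by simp⟩
            rw [pow_succ', pow_succ', Equiv.Perm.mul_apply, Equiv.Perm.mul_apply, ih, hceq,
              hsc'.cycleOf_apply]
        rw [key ℓ, hpow]
      · simp only [Equiv.Perm.notMem_support] at hy
        rw [Equiv.Perm.pow_apply_eq_self_of_apply_eq_self hy]; simp
    have hdvd : orderOf c ∣ ℓ := orderOf_dvd_of_pow_eq_one hcl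
    have hord0 : 0 < orderOf c := orderOf_pos c
    have hordge : ℓ ≤ orderOf c := by
      by_contra h
      push_neg at h
      have : (f ^ orderOf c) x = x := by
        rw [← hpows, pow_orderOf_eq_one]; simp
      exact hfree x (orderOf c) hord0 h this
    have hord : orderOf c = ℓ := le_antisymm (Nat.le_of_dvd hℓ0 hdvd) hordge
    rw [← hcyc.orderOf, hord]
  have hmem : ∀ a ∈ f.cycleType, a = ℓ := by
    intro a ha
    rw [Equiv.Perm.cycleType_def, Multiset.mem_map] at ha
    obtain ⟨c, hc, rfl⟩ := ha
    exact hall c (Finset.mem_coe.mp (by exact hc))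
  have hrep : f.cycleType = Multiset.replicate (Multiset.card f.cycleType) ℓ :=
    (Multiset.eq_replicate_card).mpr hmem
  have hsupp : f.support = Finset.univ := by
    ext x; simp [Equiv.Perm.mem_support, hfix x]
  have hsum : f.cycleType.sum = Fintype.card α := by
    rw [Equiv.Perm.sum_cycleType, hsupp, Finset.card_univ]
  rw [hrep] at hsum ⊢
  rw [Multiset.sum_replicate, smul_eq_mul] at hsum
  congr 1
  rw [← hsum, Nat.mul_div_cancel _ hℓ0]


lemma cycleType_addRight_zmod {M : ℕ} [NeZero M] (c : ZMod M) (h2 : 2 ≤ addOrderOf c) :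
    (Equiv.addRight c).cycleType =
      Multiset.replicate (M / addOrderOf c) (addOrderOf c) := by
  have key := cycleType_of_free (Equiv.addRight c) (addOrderOf c) h2 ?_ ?_
  · rwa [ZMod.card] at key
  · rw [Equiv.pow_addRight, addOrderOf_nsmul_eq_zero]
    ext x; simp
  · intro x i hi0 hiℓ h
    rw [Equiv.pow_addRight] at h
    simp only [Equiv.coe_addRight] at h
    have hz : i • c = 0 := by
      have := congrArg (· - x) (h : x + i • c = x)
      simpa [add_sub_cancel_left] using this
    have : addOrderOf c ∣ i := addOrderOf_dvd_iff_nsmul_eq_zero.mpr hz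
    have := Nat.le_of_dvd hi0 this
    omega

lemma filter_fullCycleType {n : ℕ} (g : Equiv.Perm (Fin n)) :
    (fullCycleType g).filter (2 ≤ ·) = g.cycleType := by
  rw [fullCycleType, Multiset.filter_add]
  have h1 : g.cycleType.filter (2 ≤ ·) = g.cycleType :=
    Multiset.filter_eq_self.mpr fun a ha => Equiv.Perm.two_le_of_mem_cycleType ha
  have h2 : (Multiset.replicate (n - g.cycleType.sum) 1).filter (2 ≤ ·) = 0 :=
    Multiset.filter_eq_nil.mpr fun a ha => by
      rw [Multiset.eq_of_mem_replicate ha]; omega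
  rw [h1, h2, add_zero]

/-- If the cycle type of `σ'` is obtained from that of `σ` by replacing
`p^m` cycles of length `k` with `p^(m-1)` cycles of length `pk`, then there are
`ρ, τ ∈ S_n` with `σ` conjugate to `ρ`, `τ` commuting with `ρ`, `τ` of `p`-power order,
and `σ'` conjugate to `ρ * τ^(p^(m-1))`. -/
theorem stmt_9 (p m k n : ℕ) (hp : p.Prime) (hm : 1 ≤ m) (hk : 1 ≤ k)
    (hn : k * p ^ m ≤ n) (σ σ' : Equiv.Perm (Fin n))
    (hle : Multiset.replicate (p ^ m) k ≤ fullCycleType σ)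
    (hσ' : fullCycleType σ' =
      fullCycleType σ - Multiset.replicate (p ^ m) k + Multiset.replicate (p ^ (m - 1)) (p * k)) :
    ∃ ρ τ : Equiv.Perm (Fin n), IsConj σ ρ ∧ Commute ρ τ ∧ (∃ a : ℕ, orderOf τ = p ^ a) ∧
      IsConj σ' (ρ * τ ^ (p ^ (m - 1))) := by
  classical
  obtain ⟨m', rfl⟩ : ∃ m', m = m' + 1 := ⟨m - 1, by omega⟩
  simp only [Nat.add_sub_cancel] at hσ' ⊢
  have hp2 := hp.two_le
  have hk0 : 0 < k := hk
  set e := k.factorization p with he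
  set u := k / p ^ e with hu
  have hk_eq : p ^ e * u = k := Nat.ordProj_mul_ordCompl_eq_self k p
  have hu0 : 0 < u := Nat.ordCompl_pos p hk0.ne'
  have hpu : ¬ p ∣ u := Nat.not_dvd_ordCompl hp hk0.ne'
  set M := p ^ (m' + 1) * k with hM
  have hM0 : 0 < M := by positivity
  haveI : NeZero M := ⟨hM0.ne'⟩
  have hMn : M ≤ n := by rw [hM, mul_comm]; exact hn
  set P : Fin n → Prop := fun i => (i : ℕ) < M with hP
  let eqv : {i : Fin n // P i} ≃ Fin M :=
    { toFun := fun i => ⟨i.1, i.2⟩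
      invFun := fun j => ⟨⟨j, lt_of_lt_of_le j.2 hMn⟩, j.2⟩
      left_inv := fun i => rfl
      right_inv := fun j => rfl }
  let fL : ZMod M ≃ {i : Fin n // P i} :=
    (Fintype.equivOfCardEq (by rw [ZMod.card, Fintype.card_fin])).trans eqv.symm
  have hcardQ : Fintype.card {i : Fin n // ¬ P i} = n - M := by
    rw [Fintype.card_subtype_compl, Fintype.card_fin, Fintype.card_congr eqv, Fintype.card_fin]
  -- the remaining cycle data
  set D := (fullCycleType σ - Multiset.replicate (p ^ (m' + 1)) k).filter (2 ≤ ·) with hD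
  have hfullsum : (fullCycleType σ).sum = n := by
    rw [fullCycleType, Multiset.sum_add, Multiset.sum_replicate, smul_eq_mul, mul_one]
    have h1 : σ.cycleType.sum ≤ n := by
      rw [Equiv.Perm.sum_cycleType]
      simpa using σ.support.card_le_univ
    omega
  have hsub_add : (fullCycleType σ - Multiset.replicate (p ^ (m' + 1)) k) +
      Multiset.replicate (p ^ (m' + 1)) k = fullCycleType σ := tsub_add_cancel_of_le hle
  have hsub_sum : (fullCycleType σ - Multiset.replicate (p ^ (m' + 1)) k).sum
      + p ^ (m' + 1) * k = n := by
    have h2 := congrArg Multiset.sum hsub_add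
    rw [Multiset.sum_add, Multiset.sum_replicate, smul_eq_mul] at h2
    omega
  have hDsum : D.sum ≤ n - M := by
    have h1 : D.sum ≤ (fullCycleType σ - Multiset.replicate (p ^ (m' + 1)) k).sum := by
      obtain ⟨v, hv⟩ := Multiset.le_iff_exists_add.mp
        (Multiset.filter_le (2 ≤ ·) (fullCycleType σ - Multiset.replicate (p ^ (m' + 1)) k))
      rw [hv, Multiset.sum_add, ← hD]
      exact le_self_add
    omega
  obtain ⟨χ, hχ⟩ : ∃ χ : Equiv.Perm {i : Fin n // ¬ P i}, χ.cycleType = D := by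
    rw [Equiv.Perm.exists_with_cycleType_iff]
    exact ⟨by rw [hcardQ]; exact hDsum, fun a ha => (Multiset.mem_filter.mp ha).2⟩
  -- the three building blocks
  set c1 : ZMod M := ((p ^ (m' + 1) : ℕ) : ZMod M) with hc1
  set c2 : ZMod M := ((u : ℕ) : ZMod M) with hc2
  set c3 : ZMod M := ((p ^ m' * u + p ^ (m' + 1) : ℕ) : ZMod M) with hc3
  set A : Equiv.Perm (Fin n) := (Equiv.addRight c1).extendDomain fL with hA
  set T : Equiv.Perm (Fin n) := (Equiv.addRight c2).extendDomain fL with hT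
  set B : Equiv.Perm (Fin n) := Equiv.Perm.ofSubtype χ with hB
  have hdisjLB : ∀ g : Equiv.Perm (ZMod M), Equiv.Perm.Disjoint (g.extendDomain fL) B := by
    intro g x
    by_cases hx : P x
    · right
      exact Equiv.Perm.ofSubtype_apply_of_not_mem χ (not_not.mpr hx)
    · left
      exact Equiv.Perm.extendDomain_apply_not_subtype g fL hx
  -- commutation
  have hAT : Commute A T := by
    have hcomm : Commute (Equiv.addRight c1) (Equiv.addRight c2) := by
      unfold Commute SemiconjBy
      rw [← Equiv.addRight_add, ← Equiv.addRight_add, add_comm]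
    exact hcomm.map (Equiv.Perm.extendDomainHom fL)
  have hBT : Commute B T := ((hdisjLB (Equiv.addRight c2)).commute).symm
  -- T has p-power order
  have hTpowN : T ^ p ^ (m' + 1 + e) = 1 := by
    have hMe : p ^ (m' + 1 + e) * u = M := by
      rw [hM, ← hk_eq, pow_add]; ring
    have h1 : (Equiv.addRight c2) ^ p ^ (m' + 1 + e) = 1 := by
      rw [Equiv.pow_addRight]
      have h2 : (p ^ (m' + 1 + e)) • c2 = 0 := by
        rw [hc2, nsmul_eq_mul, ← Nat.cast_mul, hMe, ZMod.natCast_self]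
      rw [h2]
      ext x; simp
    have hTdef : T = (Equiv.Perm.extendDomainHom fL) (Equiv.addRight c2) := rfl
    rw [hTdef, ← map_pow, h1, map_one]
  have hTord : ∃ a : ℕ, orderOf T = p ^ a := by
    obtain ⟨a, -, ha⟩ := (Nat.dvd_prime_pow hp).mp (orderOf_dvd_of_pow_eq_one hTpowN)
    exact ⟨a, ha⟩
  -- cycle type of A
  have hAcycle : A.cycleType = (Multiset.replicate (p ^ (m' + 1)) k).filter (2 ≤ ·) := by
    rw [hA, Equiv.Perm.cycleType_extendDomain]
    rcases lt_or_ge k 2 with h2 | h2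
    · have hk1 : k = 1 := by omega
      have hc10 : c1 = 0 := by
        rw [hc1, show p ^ (m' + 1) = M by rw [hM, hk1, mul_one], ZMod.natCast_self]
      have : Equiv.addRight c1 = 1 := by rw [hc10]; ext x; simp
      rw [this, Equiv.Perm.cycleType_one]
      refine (Multiset.filter_eq_nil.mpr fun a ha => ?_).symm
      rw [Multiset.eq_of_mem_replicate ha]
      omega
    · have haddc1 : addOrderOf c1 = k := by
        rw [hc1, ZMod.addOrderOf_coe _ hM0.ne']
        have hgcd : M.gcd (p ^ (m' + 1)) = p ^ (m' + 1) :=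
          Nat.gcd_eq_right (Dvd.intro k rfl)
        rw [hgcd, hM, Nat.mul_div_cancel_left k (by positivity)]
      rw [cycleType_addRight_zmod c1 (haddc1 ▸ h2), haddc1]
      rw [hM, Nat.mul_div_cancel _ hk0]
      exact (Multiset.filter_eq_self.mpr fun a ha => by
        rw [Multiset.eq_of_mem_replicate ha]; exact h2).symm
  -- cycle type of the product block
  have hMfac : M = p ^ m' * (p ^ (e + 1) * u) := by
    rw [hM, ← hk_eq, pow_succ, pow_succ]; ring
  have hpk : p ^ (e + 1) * u = p * k := by
    rw [← hk_eq, pow_succ]; ring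
  have haddc3 : addOrderOf c3 = p * k := by
    rw [hc3, ZMod.addOrderOf_coe _ hM0.ne']
    have hfac : p ^ m' * u + p ^ (m' + 1) = p ^ m' * (u + p) := by ring
    have hcop : Nat.Coprime (p ^ (e + 1) * u) (u + p) := by
      refine Nat.Coprime.mul ?_ ?_
      · refine Nat.Coprime.pow_left _ (hp.coprime_iff_not_dvd.mpr ?_)
        intro hdvd
        rw [Nat.add_comm] at hdvd
        exact hpu ((Nat.dvd_add_right (dvd_refl p)).mp hdvd)
      · have : Nat.Coprime u p := (hp.coprime_iff_not_dvd.mpr hpu).symm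
        simpa [Nat.coprime_add_self_right] using this.symm.symm
    have hgcd : M.gcd (p ^ m' * u + p ^ (m' + 1)) = p ^ m' := by
      rw [hfac, hMfac, Nat.gcd_mul_left, hcop.gcd_eq_one, mul_one]
    rw [hgcd, hMfac, Nat.mul_div_cancel_left _ (by positivity), hpk]
  have hpk2 : 2 ≤ p * k := by nlinarith
  have hπcycle : (Equiv.addRight c3).cycleType =
      Multiset.replicate (p ^ m') (p * k) := by
    rw [cycleType_addRight_zmod c3 (haddc3 ▸ hpk2), haddc3]
    congr 1
    rw [← hpk, hMfac, Nat.mul_div_cancel _ (by positivity)]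
  -- the key product identity
  have hATq : A * T ^ p ^ m' = (Equiv.addRight c3).extendDomain fL := by
    have h1 : T ^ p ^ m' = (Equiv.addRight ((p ^ m') • c2)).extendDomain fL := by
      have hTdef : T = (Equiv.Perm.extendDomainHom fL) (Equiv.addRight c2) := rfl
      rw [hTdef, ← map_pow, Equiv.pow_addRight]
      rfl
    rw [h1, hA, Equiv.Perm.extendDomain_mul]
    congr 1
    rw [← Equiv.addRight_add]
    congr 1
    rw [hc1, hc2, hc3, nsmul_eq_mul]
    push_cast
    ring
  -- cycle types of the candidates
  have hρcycle : (A * B).cycleType =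
      (Multiset.replicate (p ^ (m' + 1)) k).filter (2 ≤ ·) + D := by
    rw [(hdisjLB (Equiv.addRight c1)).cycleType_mul, hAcycle, hB,
      Equiv.Perm.cycleType_ofSubtype, hχ]
  have hρτcycle : (A * B * T ^ p ^ m').cycleType =
      Multiset.replicate (p ^ m') (p * k) + D := by
    have hswap : A * B * T ^ p ^ m' = (Equiv.addRight c3).extendDomain fL * B := by
      rw [mul_assoc, (hBT.pow_right (p ^ m')).eq, ← mul_assoc, hATq]
    rw [hswap, (hdisjLB (Equiv.addRight c3)).cycleType_mul, Equiv.Perm.cycleType_extendDomain,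
      hπcycle, hB, Equiv.Perm.cycleType_ofSubtype, hχ]
  -- conjugacy
  have hcyσ : σ.cycleType = D + (Multiset.replicate (p ^ (m' + 1)) k).filter (2 ≤ ·) := by
    rw [← filter_fullCycleType σ, ← hsub_add, Multiset.filter_add, hD]
  have hcyσ' : σ'.cycleType = D + Multiset.replicate (p ^ m') (p * k) := by
    rw [← filter_fullCycleType σ', hσ', Multiset.filter_add, hD]
    congr 1
    exact Multiset.filter_eq_self.mpr fun a ha => by
      rw [Multiset.eq_of_mem_replicate ha]; exact hpk2
  refine ⟨A * B, T, ?_, hAT.mul_left hBT, hTord, ?_⟩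
  · rw [Equiv.Perm.isConj_iff_cycleType_eq, hρcycle, hcyσ, add_comm]
  · rw [Equiv.Perm.isConj_iff_cycleType_eq, hρτcycle, hcyσ', add_comm]
end

section
/- For partitions λ, μ of n, the value of the character Ind_{S_μ}^{S_n} 1 (induced from the trivial character of the Young subgroup S_λ = S_{λ₁} × S_{λ₂} × ⋯) at a permutation of cycle type μ equals the number of functions f from the set of parts of μ to the set of parts of λ such that for every part of λ of length k, the parts of μ mapped to it have total length k. -/
open Equiv

/-- The Young subgroup attached to a coloring `c : Fin n → ℕ`: the permutations
preserving each fiber of `c`. -/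
def youngSubgroup {n : ℕ} (c : Fin n → ℕ) : Subgroup (Equiv.Perm (Fin n)) where
  carrier := {σ | ∀ i, c (σ i) = c i}
  one_mem' := fun _ => rfl
  mul_mem' := by
    intro a b ha hb i
    simpa [Equiv.Perm.mul_apply, hb i] using ha (b i)
  inv_mem' := by
    intro a ha i
    simpa using (ha (a⁻¹ i)).symm

/-- The value at `x` of the character of `S_n` induced from the trivial character of
the Young subgroup of the coloring `c`, computed as
`|{k : k x k⁻¹ ∈ H}| / |H|` (the division is exact). -/
noncomputable def indYoungVal {n : ℕ} (c : Fin n → ℕ) (x : Equiv.Perm (Fin n)) : ℕ :=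
  Nat.card {k : Equiv.Perm (Fin n) // k * x * k⁻¹ ∈ youngSubgroup c} /
    Nat.card (youngSubgroup c)

/-- The number of row decompositions of `lam` by `mu`: functions from the parts of `mu`
to the parts of `lam` such that the parts mapped to a given part of `lam` of size `k`
have total size `k`. -/
noncomputable def rdCount (lam mu : Multiset ℕ) : ℕ :=
  Nat.card {f : Fin mu.toList.length → Fin lam.toList.length //
    ∀ j : Fin lam.toList.length,
      (∑ i ∈ Finset.univ.filter (fun i => f i = j), mu.toList.get i) = lam.toList.get j}


lemma exists_perm_map {α β : Type*} [DecidableEq α] (g : α → β) :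
    ∀ (l₂ : List β) (l₁ : List α), l₂.Perm (l₁.map g) →
      ∃ l' : List α, l'.Perm l₁ ∧ l'.map g = l₂ := by
  intro l₂
  induction l₂ with
  | nil => intro l₁ h
           have : l₁.map g = [] := (List.Perm.nil_eq h).symm
           have h1 : l₁ = [] := by simpa using this
           exact ⟨l₁, List.Perm.refl _, by simp [h1]⟩
  | cons a t ih =>
      intro l₁ h
      have ha : a ∈ l₁.map g := h.mem_iff.mp List.mem_cons_self
      obtain ⟨b, hb, hgb⟩ := List.mem_map.mp ha
      have hperm : l₁.Perm (b :: l₁.erase b) := List.perm_cons_erase hb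
      have h2 : (a :: t).Perm (a :: (l₁.erase b).map g) := by
        have := h.trans (hperm.map g)
        simpa [hgb] using this
      have h3 : t.Perm ((l₁.erase b).map g) := h2.cons_inv
      obtain ⟨l', hl', hmap⟩ := ih (l₁.erase b) h3
      exact ⟨b :: l', (hl'.cons b).trans hperm.symm, by simp [hgb, hmap]⟩

lemma exists_equiv_comp {α β γ : Type*} [Fintype α] [Fintype β]
    (f : α → γ) (g : β → γ)
    (h : Multiset.map f Finset.univ.val = Multiset.map g Finset.univ.val) :
    ∃ e : α ≃ β, ∀ a, g (e a) = f a := by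
  classical
  set lα := (Finset.univ : Finset α).toList with hlα
  set lβ := (Finset.univ : Finset β).toList with hlβ
  have hml : ((lα.map f : List γ) : Multiset γ) = ((lβ.map g : List γ) : Multiset γ) := by
    have h1 : ((lα : Multiset α).map f) = ((lβ : Multiset β).map g) := by
      rw [Finset.coe_toList, Finset.coe_toList, h]
    simpa using h1
  have hperm : (lβ.map g).Perm (lα.map f) := (Multiset.coe_eq_coe.mp hml).symm
  obtain ⟨l', hl', hmap⟩ := exists_perm_map g (lα.map f) lβ hperm.symm
  have hlen : lα.length = l'.length := by
    have := congrArg List.length hmap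
    simpa using this.symm
  have hnodup' : l'.Nodup := hl'.nodup_iff.mpr (Finset.nodup_toList _)
  have hmem : ∀ a : α, a ∈ lα := fun a => Finset.mem_toList.mpr (Finset.mem_univ a)
  have hidx : ∀ a : α, lα.idxOf a < l'.length := fun a =>
    hlen ▸ List.idxOf_lt_length_iff.mpr (hmem a)
  refine ⟨Equiv.ofBijective (fun a => l'[lα.idxOf a]'(hidx a)) ?_, ?_⟩
  · constructor
    · intro x y hxy
      have hieq : lα.idxOf x = lα.idxOf y :=
        (hnodup'.getElem_inj_iff (hi := hidx x) (hj := hidx y)).mp hxy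
      exact (List.idxOf_inj (hmem x)).mp hieq
    · intro b
      have hb : b ∈ l' := hl'.mem_iff.mpr (Finset.mem_toList.mpr (Finset.mem_univ b))
      obtain ⟨i, hi, hib⟩ := List.getElem_of_mem hb
      have hi' : i < lα.length := hlen ▸ hi
      refine ⟨lα[i], ?_⟩
      have hix : lα.idxOf lα[i] = i := List.Nodup.idxOf_getElem (Finset.nodup_toList _) i hi'
      simp only [hix]
      exact hib
  · intro a
    show g (l'[lα.idxOf a]'(hidx a)) = f a
    have h1 : g (l'[lα.idxOf a]'(hidx a)) = (l'.map g)[lα.idxOf a]'(by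
      simpa using hidx a) := by simp
    have h2 : (l'.map g)[lα.idxOf a]'(by simpa using hidx a)
        = (lα.map f)[lα.idxOf a]'(by simpa using List.idxOf_lt_length_iff.mpr (hmem a)) := by
      congr 1
    have h3 : (lα.map f)[lα.idxOf a]'(by simpa using List.idxOf_lt_length_iff.mpr (hmem a))
        = f (lα[lα.idxOf a]'(List.idxOf_lt_length_iff.mpr (hmem a))) := by simp
    rw [h1, h2, h3, List.getElem_idxOf]



lemma exists_equiv_toList {α : Type*} [Fintype α] (w : α → ℕ) (m : Multiset ℕ)
    (h : Multiset.map w Finset.univ.val = m) :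
    ∃ e : Fin m.toList.length ≃ α, ∀ i, w (e i) = m.toList.get i := by
  obtain ⟨e, he⟩ := exists_equiv_comp (fun i : Fin m.toList.length => m.toList.get i) w
    (by rw [h, Fin.univ_val_map, List.ofFn_get, Multiset.coe_toList])
  exact ⟨e, he⟩

/-- Transfer the weighted-fiber count along weight-preserving equivalences. -/
lemma card_eq_of_equivs {A B : Type*} [Fintype A] [Fintype B] [DecidableEq A] [DecidableEq B]
    (wA : A → ℕ) (wB : B → ℕ) (lA lB : List ℕ)
    (eA : Fin lA.length ≃ A) (eB : Fin lB.length ≃ B)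
    (hA : ∀ i, wA (eA i) = lA.get i) (hB : ∀ j, wB (eB j) = lB.get j) :
    Nat.card {f : Fin lA.length → Fin lB.length //
        ∀ j, (∑ i ∈ Finset.univ.filter (fun i => f i = j), lA.get i) = lB.get j} =
      Nat.card {F : A → B //
        ∀ b, (∑ a ∈ Finset.univ.filter (fun a => F a = b), wA a) = wB b} := by
  classical
  apply Nat.card_congr
  have key : ∀ (f : Fin lA.length → Fin lB.length) (j : Fin lB.length),
      (∑ i ∈ Finset.univ.filter (fun i => f i = j), lA.get i)
        = ∑ a ∈ Finset.univ.filter (fun a => eB (f (eA.symm a)) = eB j), wA a := by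
    intro f j
    refine Finset.sum_equiv eA ?_ ?_
    · intro i; simp
    · intro i _; rw [hA]
  refine ⟨fun f => ⟨fun a => eB (f.1 (eA.symm a)), ?_⟩,
          fun F => ⟨fun i => eB.symm (F.1 (eA i)), ?_⟩, ?_, ?_⟩
  · intro b
    obtain ⟨j, rfl⟩ := eB.surjective b
    rw [← key f.1 j, f.2 j, hB]
  · intro j
    have h2 := F.2 (eB j)
    rw [← hB j, ← h2, key (fun i => eB.symm (F.1 (eA i))) j]
    refine Finset.sum_congr ?_ (fun _ _ => rfl)
    ext a; simp
  · intro f; ext i; simp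
  · intro F; ext a; simp

lemma mem_youngSubgroup {n : ℕ} (c : Fin n → ℕ) (τ : Equiv.Perm (Fin n)) :
    τ ∈ youngSubgroup c ↔ ∀ i, c (τ i) = c i := Iff.rfl

lemma conj_mem_iff {n : ℕ} (c : Fin n → ℕ) (σ k : Equiv.Perm (Fin n)) :
    k * σ * k⁻¹ ∈ youngSubgroup c ↔ ∀ j, c (k (σ j)) = c (k j) := by
  rw [mem_youngSubgroup]
  constructor
  · intro h j
    have := h (k j)
    simpa using this
  · intro h i
    have := h (k⁻¹ i)
    simpa using this

lemma map_univ_perm {n : ℕ} (k : Equiv.Perm (Fin n)) :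
    Multiset.map k Finset.univ.val = Finset.univ.val := by
  have h : Finset.univ.map k.toEmbedding = Finset.univ := Finset.map_univ_equiv k
  have := congrArg Finset.val h
  simpa [Finset.map_val] using this

lemma card_conj_eq {n : ℕ} (c : Fin n → ℕ) (σ : Equiv.Perm (Fin n)) :
    Nat.card {k : Equiv.Perm (Fin n) // k * σ * k⁻¹ ∈ youngSubgroup c} =
      Nat.card (youngSubgroup c) *
      Nat.card {d : Fin n → ℕ // (∀ i, d (σ i) = d i) ∧
        Multiset.map d Finset.univ.val = Multiset.map c Finset.univ.val} := by
  classical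
  rw [← Nat.card_prod]
  apply Nat.card_congr
  set D := {d : Fin n → ℕ // (∀ i, d (σ i) = d i) ∧
        Multiset.map d Finset.univ.val = Multiset.map c Finset.univ.val} with hD
  have hsec : ∀ d : D, ∃ e : Equiv.Perm (Fin n), ∀ a, c (e a) = d.1 a := fun d =>
    exists_equiv_comp d.1 c d.2.2
  choose sec hs using hsec
  let dmk : ∀ k : Equiv.Perm (Fin n), k * σ * k⁻¹ ∈ youngSubgroup c → D := fun k hk =>
    ⟨fun i => c (k i), (conj_mem_iff c σ k).mp hk, by
      have h1 : Multiset.map (fun i => c (k i)) Finset.univ.val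
          = Multiset.map c (Multiset.map k Finset.univ.val) := by
        rw [Multiset.map_map]; rfl
      rw [h1, map_univ_perm]⟩
  refine ⟨fun kk => (⟨kk.1 * (sec (dmk kk.1 kk.2))⁻¹, ?_⟩, dmk kk.1 kk.2),
          fun p => ⟨(p.1 : Equiv.Perm (Fin n)) * sec p.2, ?_⟩, ?_, ?_⟩
  · -- k * (sec dk)⁻¹ ∈ H
    rw [mem_youngSubgroup]
    intro i
    simp only [Equiv.Perm.mul_apply]
    have h1 : c (kk.1 ((sec (dmk kk.1 kk.2))⁻¹ i)) = (dmk kk.1 kk.2).1 ((sec (dmk kk.1 kk.2))⁻¹ i) := rfl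
    rw [h1, ← hs (dmk kk.1 kk.2)]
    simp
  · -- membership
    rw [conj_mem_iff]
    intro j
    have hmem := p.1.2
    rw [mem_youngSubgroup] at hmem
    simp only [Equiv.Perm.mul_apply]
    rw [hmem, hmem, hs p.2, hs p.2, p.2.2.1 j]
  · -- left inverse : on {k // ..}
    rintro ⟨k, hk⟩
    apply Subtype.ext
    show (k * (sec (dmk k hk))⁻¹) * sec (dmk k hk) = k
    group
  · -- right inverse : on H × D
    rintro ⟨h, d⟩
    have hd : ∀ hm : ((h : Equiv.Perm (Fin n)) * sec d) * σ *
        ((h : Equiv.Perm (Fin n)) * sec d)⁻¹ ∈ youngSubgroup c,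
        dmk ((h : Equiv.Perm (Fin n)) * sec d) hm = d := by
      intro hm
      apply Subtype.ext
      funext i
      have hmem := h.2
      rw [mem_youngSubgroup] at hmem
      show c (((h : Equiv.Perm (Fin n)) * sec d) i) = d.1 i
      simp only [Equiv.Perm.mul_apply]
      rw [hmem, hs d]
    have hm2 : ((h : Equiv.Perm (Fin n)) * sec d) * σ *
        ((h : Equiv.Perm (Fin n)) * sec d)⁻¹ ∈ youngSubgroup c := by
      rw [conj_mem_iff]
      intro j
      have hmem := h.2
      rw [mem_youngSubgroup] at hmem
      simp only [Equiv.Perm.mul_apply]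
      rw [hmem, hmem, hs d, hs d, d.2.1 j]
    refine Prod.ext_iff.mpr ⟨?_, hd hm2⟩
    apply Subtype.ext
    show ((h : Equiv.Perm (Fin n)) * sec d) *
        (sec (dmk ((h : Equiv.Perm (Fin n)) * sec d) hm2))⁻¹ = (h : Equiv.Perm (Fin n))
    rw [hd hm2]
    group

variable {n : ℕ}

abbrev OrbT (σ : Equiv.Perm (Fin n)) :=
  {g : Equiv.Perm (Fin n) // g ∈ σ.cycleFactorsFinset} ⊕ {i : Fin n // σ i = i}

def wOrb (σ : Equiv.Perm (Fin n)) : OrbT σ → ℕ :=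
  fun a => Sum.rec (fun g => g.1.support.card) (fun _ => 1) a

abbrev ColT (c : Fin n → ℕ) := {v : ℕ // v ∈ Finset.image c Finset.univ}

def fibC (c : Fin n → ℕ) : ColT c → ℕ :=
  fun v => (Finset.univ.filter (fun i => c i = v.1)).card

def pOrb (σ : Equiv.Perm (Fin n)) : Fin n → OrbT σ := fun i =>
  if h : σ i = i then Sum.inr ⟨i, h⟩
  else Sum.inl ⟨σ.cycleOf i,
    (Equiv.Perm.cycleOf_mem_cycleFactorsFinset_iff (f := σ)).2 (Equiv.Perm.mem_support.2 h)⟩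

lemma pOrb_apply (σ : Equiv.Perm (Fin n)) (i : Fin n) : pOrb σ (σ i) = pOrb σ i := by
  by_cases h : σ i = i
  · rw [h]
  · have h2 : ¬ σ (σ i) = σ i := fun hh => h (σ.injective hh)
    unfold pOrb
    rw [dif_neg h, dif_neg h2]
    simp only [Sum.inl.injEq, Subtype.mk.injEq]
    exact Equiv.Perm.cycleOf_self_apply σ i

lemma pOrb_eq_inl {σ : Equiv.Perm (Fin n)} {g : Equiv.Perm (Fin n)}
    (hg : g ∈ σ.cycleFactorsFinset) {i : Fin n} (hi : i ∈ g.support) :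
    pOrb σ i = Sum.inl ⟨g, hg⟩ := by
  have hsupp : i ∈ σ.support := Equiv.Perm.mem_cycleFactorsFinset_support_le hg hi
  have h : ¬ σ i = i := Equiv.Perm.mem_support.1 hsupp
  unfold pOrb
  rw [dif_neg h]
  simp only [Sum.inl.injEq, Subtype.mk.injEq]
  exact (Equiv.Perm.cycle_is_cycleOf hi hg).symm

lemma filter_pOrb (σ : Equiv.Perm (Fin n)) (a : OrbT σ) :
    (Finset.univ.filter (fun i => pOrb σ i = a)).card = wOrb σ a := by
  classical
  rcases a with ⟨g, hg⟩ | ⟨j, hj⟩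
  · have : Finset.univ.filter (fun i => pOrb σ i = Sum.inl ⟨g, hg⟩) = g.support := by
      ext i
      simp only [Finset.mem_filter, Finset.mem_univ, true_and]
      constructor
      · intro h
        by_cases hf : σ i = i
        · rw [pOrb, dif_pos hf] at h; exact absurd h (by simp)
        · rw [pOrb, dif_neg hf] at h
          simp only [Sum.inl.injEq, Subtype.mk.injEq] at h
          rw [← h]
          exact Equiv.Perm.mem_support_cycleOf_iff.2
            ⟨Equiv.Perm.SameCycle.refl σ i, Equiv.Perm.mem_support.2 hf⟩
      · intro h
        exact pOrb_eq_inl hg h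
    rw [this]; rfl
  · have : Finset.univ.filter (fun i => pOrb σ i = Sum.inr ⟨j, hj⟩) = {j} := by
      ext i
      simp only [Finset.mem_filter, Finset.mem_univ, true_and, Finset.mem_singleton]
      constructor
      · intro h
        by_cases hf : σ i = i
        · rw [pOrb, dif_pos hf] at h
          simpa using h
        · rw [pOrb, dif_neg hf] at h; exact absurd h (by simp)
      · rintro rfl
        rw [pOrb, dif_pos hj]
    rw [this]; rfl

lemma sumw (σ : Equiv.Perm (Fin n)) (c : Fin n → ℕ) (f : OrbT σ → ColT c) (b : ColT c) :
    (Finset.univ.filter (fun i => f (pOrb σ i) = b)).card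
      = ∑ a ∈ Finset.univ.filter (fun a => f a = b), wOrb σ a := by
  classical
  rw [Finset.card_eq_sum_card_fiberwise
    (f := pOrb σ) (t := Finset.univ.filter (fun a => f a = b))
    (fun i hi => by
      simp only [Finset.coe_filter, Finset.mem_coe, Finset.mem_filter, Finset.mem_univ, true_and, Set.mem_setOf_eq] at hi ⊢
      exact hi)]
  refine Finset.sum_congr rfl ?_
  intro a ha
  simp only [Finset.mem_filter, Finset.mem_univ, true_and] at ha
  rw [← filter_pOrb σ a]
  congr 1
  ext i
  simp only [Finset.mem_filter, Finset.mem_univ, true_and, and_iff_right_iff_imp]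
  intro h; rw [h]; exact ha

lemma wOrb_multiset (σ : Equiv.Perm (Fin n)) :
    Multiset.map (wOrb σ) Finset.univ.val = fullCycleType σ := by
  classical
  have h1 : (Finset.univ : Finset (OrbT σ)) = Finset.univ.disjSum Finset.univ :=
    (Finset.univ_disjSum_univ).symm
  rw [h1, Finset.val_disjSum]
  rw [Multiset.disjSum]
  rw [Multiset.map_add, Multiset.map_map, Multiset.map_map]
  have h2 : Multiset.map ((wOrb σ) ∘ Sum.inl)
      (Finset.univ : Finset {g : Equiv.Perm (Fin n) // g ∈ σ.cycleFactorsFinset}).val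
      = σ.cycleType := by
    rw [Finset.univ_eq_attach, Finset.attach_val]
    have hmv := Multiset.attach_map_val' σ.cycleFactorsFinset.val
      (fun g => g.support.card)
    rw [show Multiset.map ((wOrb σ) ∘ Sum.inl) σ.cycleFactorsFinset.val.attach
        = Multiset.map (fun i => (fun g : Equiv.Perm (Fin n) => g.support.card) i.val)
          σ.cycleFactorsFinset.val.attach from rfl, hmv]
    rfl
  have h3 : Multiset.map ((wOrb σ) ∘ Sum.inr)
      (Finset.univ : Finset {i : Fin n // σ i = i}).val
      = Multiset.replicate (n - σ.cycleType.sum) 1 := by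
    rw [show ((wOrb σ) ∘ Sum.inr : {i : Fin n // σ i = i} → ℕ) = fun _ => 1 from rfl]
    rw [Multiset.map_const']
    congr 1
    have h4 : (Multiset.card (Finset.univ : Finset {i : Fin n // σ i = i}).val)
        = Fintype.card {i : Fin n // σ i = i} := rfl
    rw [h4, Fintype.card_subtype]
    have h5 : Finset.univ.filter (fun i : Fin n => σ i = i) = (σ.support)ᶜ := by
      ext i
      simp [Equiv.Perm.mem_support]
    rw [h5, Finset.card_compl, Equiv.Perm.sum_cycleType]
    simp
  rw [h2, h3]
  rfl

lemma ms_iff (d c : Fin n → ℕ) :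
    Multiset.map d Finset.univ.val = Multiset.map c Finset.univ.val ↔
      ∀ v, (Finset.univ.filter (fun i => d i = v)).card
          = (Finset.univ.filter (fun i => c i = v)).card := by
  classical
  have key : ∀ (e : Fin n → ℕ) (v : ℕ), Multiset.count v (Multiset.map e Finset.univ.val)
      = (Finset.univ.filter (fun i => e i = v)).card := by
    intro e v
    rw [Multiset.count_map]
    rw [Finset.card_def, Finset.filter_val]
    congr 1
    apply Multiset.filter_congr
    intro x _
    exact eq_comm
  rw [Multiset.ext]
  constructor
  · intro h v
    rw [← key d v, ← key c v, h v]
  · intro h v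
    rw [key d v, key c v, h v]

lemma sameCycle_const {σ : Equiv.Perm (Fin n)} {d : Fin n → ℕ}
    (hd : ∀ i, d (σ i) = d i) {x y : Fin n} (h : σ.SameCycle x y) : d x = d y := by
  obtain ⟨m, hm⟩ := h
  have hinv : ∀ x : Fin n, d (σ⁻¹ x) = d x := by
    intro x
    have h1 := hd (σ⁻¹ x)
    rw [show σ (σ⁻¹ x) = x from σ.apply_symm_apply x] at h1
    exact h1.symm
  have key : ∀ (m : ℤ) (x : Fin n), d ((σ ^ m) x) = d x := by
    intro m
    induction m using Int.induction_on with
    | zero => intro x; simp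
    | succ k ih =>
        intro x
        have h1 : (σ ^ ((k : ℤ) + 1)) x = (σ ^ (k : ℤ)) (σ x) := by
          rw [zpow_add_one]; rfl
        rw [h1, ih, hd]
    | pred k ih =>
        intro x
        have h1 : (σ ^ (-(k : ℤ) - 1)) x = (σ ^ (-(k : ℤ))) (σ⁻¹ x) := by
          rw [zpow_sub_one]; rfl
        rw [h1, ih, hinv]
  rw [← hm, key]

noncomputable def ptC {σ : Equiv.Perm (Fin n)}
    (g : {g : Equiv.Perm (Fin n) // g ∈ σ.cycleFactorsFinset}) : Fin n :=
  ((Equiv.Perm.mem_cycleFactorsFinset_iff.mp g.2).1.nonempty_support).choose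

lemma ptC_mem {σ : Equiv.Perm (Fin n)}
    (g : {g : Equiv.Perm (Fin n) // g ∈ σ.cycleFactorsFinset}) : ptC g ∈ g.1.support :=
  ((Equiv.Perm.mem_cycleFactorsFinset_iff.mp g.2).1.nonempty_support).choose_spec

lemma card_D_eq (σ : Equiv.Perm (Fin n)) (c : Fin n → ℕ) :
    Nat.card {d : Fin n → ℕ // (∀ i, d (σ i) = d i) ∧
        Multiset.map d Finset.univ.val = Multiset.map c Finset.univ.val}
      = Nat.card {F : OrbT σ → ColT c //
          ∀ b, (∑ a ∈ Finset.univ.filter (fun a => F a = b), wOrb σ a) = fibC c b} := by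
  classical
  apply Nat.card_congr
  have hmemimg : ∀ (d : Fin n → ℕ),
      Multiset.map d Finset.univ.val = Multiset.map c Finset.univ.val →
      ∀ x, d x ∈ Finset.image c Finset.univ := by
    intro d hd x
    have h1 : d x ∈ Multiset.map d Finset.univ.val :=
      Multiset.mem_map_of_mem d (Finset.mem_val.mpr (Finset.mem_univ x))
    rw [hd] at h1
    obtain ⟨i, _, hi⟩ := Multiset.mem_map.mp h1
    exact Finset.mem_image.mpr ⟨i, Finset.mem_univ i, hi⟩
  let bwd : (OrbT σ → ColT c) → (Fin n → ℕ) := fun f i => (f (pOrb σ i)).1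
  let fwd : ∀ (d : Fin n → ℕ),
      (Multiset.map d Finset.univ.val = Multiset.map c Finset.univ.val) →
      (OrbT σ → ColT c) := fun d hd a =>
    Sum.rec (fun g => ⟨d (ptC g), hmemimg d hd _⟩) (fun i => ⟨d i.1, hmemimg d hd _⟩) a
  have hbf : ∀ (d : Fin n → ℕ) (hinv : ∀ i, d (σ i) = d i)
      (hd : Multiset.map d Finset.univ.val = Multiset.map c Finset.univ.val),
      bwd (fwd d hd) = d := by
    intro d hinv hd
    funext i
    by_cases h : σ i = i
    · show (fwd d hd (pOrb σ i)).1 = d i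
      rw [pOrb, dif_pos h]
    · show (fwd d hd (pOrb σ i)).1 = d i
      rw [pOrb, dif_neg h]
      show d (ptC _) = d i
      have hpt := ptC_mem (σ := σ) ⟨σ.cycleOf i,
        (Equiv.Perm.cycleOf_mem_cycleFactorsFinset_iff (f := σ)).2 (Equiv.Perm.mem_support.2 h)⟩
      have hsc : σ.SameCycle i (ptC ⟨σ.cycleOf i,
          (Equiv.Perm.cycleOf_mem_cycleFactorsFinset_iff (f := σ)).2
            (Equiv.Perm.mem_support.2 h)⟩) :=
        (Equiv.Perm.mem_support_cycleOf_iff.1 hpt).1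
      exact (sameCycle_const hinv hsc).symm
  have hcount : ∀ (f : OrbT σ → ColT c) (b : ColT c),
      (Finset.univ.filter (fun i => bwd f i = b.1)).card
        = ∑ a ∈ Finset.univ.filter (fun a => f a = b), wOrb σ a := by
    intro f b
    rw [← sumw σ c f b]
    congr 1
    ext i
    simp only [Finset.mem_filter, Finset.mem_univ, true_and]
    exact ⟨fun h => Subtype.ext h, fun h => congrArg Subtype.val h⟩
  have hbnot : ∀ (f : OrbT σ → ColT c) (v : ℕ), v ∉ Finset.image c Finset.univ →
      Finset.univ.filter (fun i => bwd f i = v) = ∅ := by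
    intro f v hv
    ext i
    simp only [Finset.mem_filter, Finset.mem_univ, true_and, Finset.notMem_empty, iff_false]
    intro h
    exact hv (h ▸ (f (pOrb σ i)).2)
  refine ⟨fun d => ⟨fwd d.1 d.2.2, ?_⟩, fun f => ⟨bwd f.1, ?_, ?_⟩, ?_, ?_⟩
  · -- fwd condition
    intro b
    have h1 := hcount (fwd d.1 d.2.2) b
    rw [hbf d.1 d.2.1 d.2.2] at h1
    rw [← h1]
    show _ = (Finset.univ.filter (fun i => c i = b.1)).card
    rw [(ms_iff d.1 c).mp d.2.2 b.1]
  · -- bwd invariance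
    intro i
    show (f.1 (pOrb σ (σ i))).1 = (f.1 (pOrb σ i)).1
    rw [pOrb_apply]
  · -- bwd multiset
    rw [ms_iff]
    intro v
    by_cases hv : v ∈ Finset.image c Finset.univ
    · have h1 := hcount f.1 ⟨v, hv⟩
      rw [h1, f.2 ⟨v, hv⟩]
      rfl
    · rw [hbnot f.1 v hv]
      have h2 : Finset.univ.filter (fun i => c i = v) = ∅ := by
        ext i
        simp only [Finset.mem_filter, Finset.mem_univ, true_and, Finset.notMem_empty, iff_false]
        intro h
        exact hv (Finset.mem_image.mpr ⟨i, Finset.mem_univ i, h⟩)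
      rw [h2]
  · -- left inverse
    rintro ⟨d, hinv, hd⟩
    apply Subtype.ext
    exact hbf d hinv hd
  · -- right inverse
    rintro ⟨f, hf⟩
    apply Subtype.ext
    funext a
    rcases a with g | i
    · apply Subtype.ext
      show bwd f (ptC g) = (f (Sum.inl g)).1
      show (f (pOrb σ (ptC g))).1 = (f (Sum.inl g)).1
      rw [pOrb_eq_inl g.2 (ptC_mem g)]
    · apply Subtype.ext
      show bwd f i.1 = (f (Sum.inr i)).1
      show (f (pOrb σ i.1)).1 = (f (Sum.inr i)).1
      rw [show pOrb σ i.1 = Sum.inr i from by rw [pOrb, dif_pos i.2]]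

lemma fibC_multiset (c : Fin n → ℕ) :
    Multiset.map (fibC c) Finset.univ.val
      = (Finset.image c Finset.univ).val.map
          (fun v => (Finset.univ.filter (fun i => c i = v)).card) := by
  classical
  rw [Finset.univ_eq_attach, Finset.attach_val]
  have hmv := Multiset.attach_map_val' (Finset.image c Finset.univ).val
    (fun v => (Finset.univ.filter (fun i => c i = v)).card)
  rw [show Multiset.map (fibC c) (Finset.image c Finset.univ).val.attach
      = Multiset.map (fun x => (fun v => (Finset.univ.filter (fun i => c i = v)).card) x.val)
        (Finset.image c Finset.univ).val.attach from rfl, hmv]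

/-- For partitions `lam, mu` of `n`, the value of `Ind_{S_lam}^{S_n} 1` at a
permutation of cycle type `mu` equals the number of row decompositions of `lam` by `mu`. -/
theorem stmt_11 (n : ℕ) (lam mu : Nat.Partition n) (σ : Equiv.Perm (Fin n))
    (hσ : fullCycleType σ = mu.parts) (c : Fin n → ℕ)
    (hc : ((Finset.image c Finset.univ).val.map
        (fun v => (Finset.univ.filter (fun i => c i = v)).card)) = lam.parts) :
    indYoungVal c σ = rdCount lam.parts mu.parts := by
  classical
  rw [indYoungVal, card_conj_eq c σ]
  have hpos : 0 < Nat.card (youngSubgroup c) := Nat.card_pos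
  rw [Nat.mul_div_cancel_left _ hpos, card_D_eq σ c, rdCount]
  obtain ⟨eA, heA⟩ := exists_equiv_toList (wOrb σ) mu.parts (by rw [wOrb_multiset, hσ])
  obtain ⟨eB, heB⟩ := exists_equiv_toList (fibC c) lam.parts (by rw [fibC_multiset, hc])
  exact (card_eq_of_equivs (wOrb σ) (fibC c) mu.parts.toList lam.parts.toList
    eA eB heA heB).symm
end

section
/- If σ, σ' ∈ S_n satisfy χ(σ) ≡ χ(σ') (mod p^m) for every character χ of S_n, then the cycle types of σ and σ' are related by the equivalence relation generated by replacing p^m parts of size k with p^(m−1) parts of size pk. -/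
open Equiv

section AuxCombinatorics
open Polynomial

noncomputable def auxFF (lam : Multiset ℕ) : Polynomial ℤ :=
  (lam.map (fun c => 1 + Polynomial.X ^ c)).prod

lemma auxFF_zero : auxFF 0 = 1 := by simp [auxFF]

lemma auxFF_cons (c : ℕ) (s : Multiset ℕ) : auxFF (c ::ₘ s) = (1 + X ^ c) * auxFF s := by
  simp [auxFF]

lemma auxFF_add (s t : Multiset ℕ) : auxFF (s + t) = auxFF s * auxFF t := by
  simp [auxFF]

lemma auxFF_replicate (a k : ℕ) : auxFF (Multiset.replicate a k) = (1 + X ^ k) ^ a := by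
  simp [auxFF, Multiset.map_replicate, Multiset.prod_replicate]

lemma opx_monic {c : ℕ} (hc : c ≠ 0) : (1 + X ^ c : Polynomial ℤ).Monic := by
  rw [add_comm, ← C_1]
  exact monic_X_pow_add_C _ hc

lemma opx_natDegree {c : ℕ} : (1 + X ^ c : Polynomial ℤ).natDegree = c := by
  rw [add_comm, ← C_1]
  exact natDegree_X_pow_add_C

lemma auxFF_monic (lam : Multiset ℕ) (h0 : 0 ∉ lam) : (auxFF lam).Monic := by
  induction lam using Multiset.induction with
  | empty => simpa [auxFF_zero] using monic_one
  | cons c s ih =>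
    rw [auxFF_cons]
    exact (opx_monic (fun h => h0 (h ▸ Multiset.mem_cons_self c s))).mul
      (ih (fun hs => h0 (Multiset.mem_cons_of_mem hs)))

lemma auxFF_natDegree (lam : Multiset ℕ) (h0 : 0 ∉ lam) : (auxFF lam).natDegree = lam.sum := by
  induction lam using Multiset.induction with
  | empty => simp [auxFF_zero]
  | cons c s ih =>
    rw [auxFF_cons, Monic.natDegree_mul (opx_monic (fun h => h0 (h ▸ Multiset.mem_cons_self c s)))
      (auxFF_monic s (fun hs => h0 (Multiset.mem_cons_of_mem hs))), opx_natDegree,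
      ih (fun hs => h0 (Multiset.mem_cons_of_mem hs)), Multiset.sum_cons]

lemma auxFF_coeff_zero (lam : Multiset ℕ) (h0 : 0 ∉ lam) : (auxFF lam).coeff 0 = 1 := by
  induction lam using Multiset.induction with
  | empty => simp [auxFF_zero]
  | cons c s ih =>
    have hc : c ≠ 0 := fun h => h0 (h ▸ Multiset.mem_cons_self c s)
    rw [auxFF_cons, mul_coeff_zero, ih (fun hs => h0 (Multiset.mem_cons_of_mem hs))]
    simp [coeff_X_pow, hc, Ne.symm hc]

lemma auxFF_coeff_min (k : ℕ) (hk : k ≠ 0) (lam : Multiset ℕ)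
    (hmin : ∀ c ∈ lam, k ≤ c) (h0 : 0 ∉ lam) :
    (auxFF lam).coeff k = lam.count k := by
  induction lam using Multiset.induction with
  | empty => simp [auxFF_zero, coeff_one, hk, Ne.symm hk]
  | cons c s ih =>
    have hs0 : 0 ∉ s := fun hs => h0 (Multiset.mem_cons_of_mem hs)
    have hsmin : ∀ c ∈ s, k ≤ c := fun c hc => hmin c (Multiset.mem_cons_of_mem hc)
    have hkc : k ≤ c := hmin c (Multiset.mem_cons_self c s)
    rw [auxFF_cons, add_mul, one_mul, coeff_add, ih hsmin hs0]
    rw [mul_comm, coeff_mul_X_pow']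
    rcases eq_or_lt_of_le hkc with h | h
    · subst h
      simp [auxFF_coeff_zero s hs0, Multiset.count_cons_self, add_comm]
    · have : ¬ (c ≤ k) := not_le.mpr h
      simp [this, Multiset.count_cons_of_ne (by omega : k ≠ c)]



lemma map_zmod_eq_zero_iff {p : ℕ} (hp : p.Prime) (f : Polynomial ℤ) :
    f.map (Int.castRingHom (ZMod p)) = 0 ↔ C (p : ℤ) ∣ f := by
  haveI : NeZero p := ⟨hp.ne_zero⟩
  rw [C_dvd_iff_dvd_coeff]
  constructor
  · intro h i
    have := congrArg (fun g => Polynomial.coeff g i) h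
    simp only [coeff_map, coeff_zero] at this
    exact (ZMod.intCast_zmod_eq_zero_iff_dvd _ p).mp (by exact_mod_cast this)
  · intro h
    ext i
    simp only [coeff_map, coeff_zero]
    exact_mod_cast (ZMod.intCast_zmod_eq_zero_iff_dvd _ p).mpr (by exact_mod_cast h i)

lemma cancel_pow_p {p : ℕ} (hp : p.Prime) (g : Polynomial ℤ)
    (hg : g.map (Int.castRingHom (ZMod p)) ≠ 0) :
    ∀ (m : ℕ) (h : Polynomial ℤ), C ((p : ℤ) ^ m) ∣ g * h → C ((p : ℤ) ^ m) ∣ h := by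
  intro m
  induction m with
  | zero => intro h _; simp
  | succ m ih =>
    intro h hdvd
    haveI : Fact p.Prime := ⟨hp⟩
    have hCp : (C ((p : ℤ)) : Polynomial ℤ) ≠ 0 := by
      simpa using hp.ne_zero
    have hsplit : (C ((p : ℤ) ^ (m + 1)) : Polynomial ℤ) = C ((p:ℤ)) * C ((p:ℤ)^m) := by
      rw [← C_mul, pow_succ, mul_comm]
    have h1 : C ((p : ℤ)) ∣ g * h := by
      refine dvd_trans ?_ hdvd
      rw [hsplit]; exact Dvd.intro _ rfl
    have h2 : (g * h).map (Int.castRingHom (ZMod p)) = 0 := (map_zmod_eq_zero_iff hp _).mpr h1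
    rw [Polynomial.map_mul] at h2
    have h3 : h.map (Int.castRingHom (ZMod p)) = 0 := by
      rcases mul_eq_zero.mp h2 with h' | h'
      · exact absurd h' hg
      · exact h'
    obtain ⟨h', rfl⟩ := (map_zmod_eq_zero_iff hp h).mp h3
    have h4 : C ((p:ℤ)^m) ∣ g * h' := by
      have h5 : C ((p:ℤ)) * C ((p:ℤ)^m) ∣ C ((p:ℤ)) * (g * h') := by
        rw [← hsplit]
        have : g * (C ((p:ℤ)) * h') = C ((p:ℤ)) * (g * h') := by ring
        rw [← this]; exact hdvd
      exact (mul_dvd_mul_iff_left hCp).mp h5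
    obtain ⟨h'', hh⟩ := ih h' h4
    exact ⟨h'', by rw [hsplit, hh]; ring⟩

lemma freshman (p k : ℕ) (hp : p.Prime) :
    C ((p:ℤ)) ∣ (1 + X ^ k : Polynomial ℤ) ^ p - (1 + X ^ (p * k)) := by
  haveI : Fact p.Prime := ⟨hp⟩
  rw [← map_zmod_eq_zero_iff hp]
  simp only [Polynomial.map_sub, Polynomial.map_pow, Polynomial.map_add, Polynomial.map_one,
    Polynomial.map_X]
  rw [add_pow_char]
  rw [← pow_mul, one_pow, mul_comm k p]
  ring

lemma move_pow_dvd {p m : ℕ} (k : ℕ) (hp : p.Prime) (hm : 1 ≤ m) :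
    C ((p:ℤ)^m) ∣ (1 + X ^ k : Polynomial ℤ) ^ (p ^ m) - (1 + X ^ (p * k)) ^ (p ^ (m - 1)) := by
  have hsub : ((p : Polynomial ℤ)) ∣ (1 + X ^ k : Polynomial ℤ) ^ p - (1 + X ^ (p * k)) := by
    have := freshman p k hp
    rwa [C_eq_natCast] at this
  have h := dvd_sub_pow_of_dvd_sub (R := Polynomial ℤ) hsub (m - 1)
  have he : ((1 + X ^ k : Polynomial ℤ) ^ p) ^ (p ^ (m-1)) = (1 + X ^ k) ^ (p ^ m) := by
    rw [← pow_mul]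
    congr 1
    rw [← pow_succ']
    congr 1
    omega
  have hm' : (m - 1) + 1 = m := by omega
  rw [he, hm'] at h
  rw [map_pow, C_eq_natCast]
  exact h

def mRel (p m : ℕ) (lam mu : Multiset ℕ) : Prop :=
  ∃ k : ℕ, 1 ≤ k ∧ Multiset.replicate (p ^ m) k ≤ lam ∧
    mu = lam - Multiset.replicate (p ^ m) k + Multiset.replicate (p ^ (m - 1)) (p * k)

lemma mRel_dvd {p m : ℕ} (hp : p.Prime) (hm : 1 ≤ m) {lam mu : Multiset ℕ}
    (h : mRel p m lam mu) : C ((p:ℤ)^m) ∣ auxFF lam - auxFF mu := by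
  obtain ⟨k, hk, hle, rfl⟩ := h
  have h1 : (lam - Multiset.replicate (p^m) k) + Multiset.replicate (p^m) k = lam :=
    tsub_add_cancel_of_le hle
  have key : auxFF lam = auxFF (lam - Multiset.replicate (p^m) k) * (1 + X ^ k) ^ (p ^ m) := by
    conv_lhs => rw [← h1]
    rw [auxFF_add, auxFF_replicate]
  have h2 : auxFF lam - auxFF (lam - Multiset.replicate (p ^ m) k +
      Multiset.replicate (p ^ (m - 1)) (p * k)) =
      auxFF (lam - Multiset.replicate (p^m) k) *
        ((1 + X ^ k) ^ (p ^ m) - (1 + X ^ (p * k)) ^ (p ^ (m - 1))) := by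
    rw [key, auxFF_add, auxFF_replicate]
    ring
  rw [h2]
  exact Dvd.dvd.mul_left (move_pow_dvd k hp hm) _

lemma reduce_aux {p m : ℕ} (hp : p.Prime) (hm : 1 ≤ m) :
    ∀ (N : ℕ) (lam : Multiset ℕ), Multiset.card lam ≤ N → 0 ∉ lam →
    ∃ mu, Relation.EqvGen (mRel p m) lam mu ∧ (∀ k, mu.count k < p ^ m) ∧ 0 ∉ mu ∧
      C ((p:ℤ)^m) ∣ auxFF lam - auxFF mu := by
  intro N
  induction N with
  | zero =>
    intro lam hcard h0
    have hl : lam = 0 := Multiset.card_eq_zero.mp (Nat.le_zero.mp hcard)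
    subst hl
    exact ⟨0, Relation.EqvGen.refl _, fun k => by simp [pow_pos hp.pos], by simp, by simp⟩
  | succ N ih =>
    intro lam hcard h0
    by_cases hred : ∀ k, lam.count k < p ^ m
    · exact ⟨lam, Relation.EqvGen.refl _, hred, h0, by simp⟩
    · push_neg at hred
      obtain ⟨k, hk⟩ := hred
      have hkmem : k ∈ lam := Multiset.count_pos.mp (lt_of_lt_of_le (pow_pos hp.pos m) hk)
      have hk1 : 1 ≤ k := Nat.one_le_iff_ne_zero.mpr (fun h => h0 (h ▸ hkmem))
      have hle : Multiset.replicate (p^m) k ≤ lam := Multiset.le_count_iff_replicate_le.mp hk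
      set mu1 := lam - Multiset.replicate (p^m) k + Multiset.replicate (p^(m-1)) (p*k) with hmu1
      have hrel : mRel p m lam mu1 := ⟨k, hk1, hle, rfl⟩
      have hcards : Multiset.card (lam - Multiset.replicate (p^m) k) + p ^ m =
          Multiset.card lam := by
        have h2 := congrArg Multiset.card (tsub_add_cancel_of_le hle)
        rw [Multiset.card_add, Multiset.card_replicate] at h2
        exact h2
      have hppow : p^(m-1) < p^m := by
        apply Nat.pow_lt_pow_right hp.one_lt
        omega
      have hcard1 : Multiset.card mu1 ≤ N := by
        rw [hmu1, Multiset.card_add, Multiset.card_replicate]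
        omega
      have h0mu : 0 ∉ mu1 := by
        intro hmem
        rcases Multiset.mem_add.mp hmem with h | h
        · exact h0 (Multiset.mem_of_le tsub_le_self h)
        · have := Multiset.eq_of_mem_replicate h
          exact absurd this.symm (Nat.mul_ne_zero hp.ne_zero (by omega))
      obtain ⟨mu, hchain, hredu, h0', hdvd⟩ := ih mu1 hcard1 h0mu
      refine ⟨mu, Relation.EqvGen.trans _ _ _ (Relation.EqvGen.rel _ _ hrel) hchain, hredu, h0', ?_⟩
      have := dvd_add (mRel_dvd hp hm hrel) hdvd
      rwa [sub_add_sub_cancel] at this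

lemma core_aux {p m : ℕ} (hp : p.Prime) (hm : 1 ≤ m) :
    ∀ (N : ℕ) (lam mu : Multiset ℕ), Multiset.card lam + Multiset.card mu ≤ N →
    (∀ k, lam.count k < p ^ m) → (∀ k, mu.count k < p ^ m) → 0 ∉ lam → 0 ∉ mu →
    C ((p:ℤ)^m) ∣ auxFF lam - auxFF mu → lam = mu := by
  have hpm1 : (1:ℕ) < p ^ m := by
    calc 1 < p := hp.one_lt
    _ ≤ p ^ m := Nat.le_self_pow (by omega) p
  have main0 : ∀ mu : Multiset ℕ, 0 ∉ mu → C ((p:ℤ)^m) ∣ auxFF 0 - auxFF mu → mu = 0 := by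
    intro mu h0m hdvd
    by_contra hmu0
    have hmem := Multiset.exists_mem_of_ne_zero hmu0
    obtain ⟨c, hc⟩ := hmem
    have hsum : mu.sum ≠ 0 := by
      obtain ⟨rest, rfl⟩ := Multiset.exists_cons_of_mem hc
      have hc0 : c ≠ 0 := fun h => h0m (h ▸ hc)
      rw [Multiset.sum_cons]
      omega
    have hco := (C_dvd_iff_dvd_coeff _ _).mp hdvd mu.sum
    have hlc : (auxFF mu).coeff mu.sum = 1 := by
      have := (auxFF_monic mu h0m).coeff_natDegree
      rwa [auxFF_natDegree mu h0m] at this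
    rw [coeff_sub, auxFF_zero, coeff_one, if_neg hsum, hlc] at hco
    have h1 : ((p:ℤ)^m) ∣ (1:ℤ) := by
      simpa [dvd_neg] using hco
    have h2 := Int.le_of_dvd one_pos h1
    have h3 : ((p:ℤ)^m) = ((p^m : ℕ) : ℤ) := by push_cast; ring
    rw [h3] at h2
    omega
  intro N
  induction N with
  | zero =>
    intro lam mu hcard _ _ _ _ _
    have h1 : lam = 0 := Multiset.card_eq_zero.mp (by omega)
    have h2 : mu = 0 := Multiset.card_eq_zero.mp (by omega)
    rw [h1, h2]
  | succ N ih =>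
    intro lam mu hcard hrl hrm h0l h0m hdvd
    by_cases hlam0 : lam = 0
    · rw [hlam0]
      exact (main0 mu h0m (by rwa [hlam0] at hdvd)).symm
    by_cases hmu0 : mu = 0
    · rw [hmu0]
      have hdvd' : C ((p:ℤ)^m) ∣ auxFF 0 - auxFF lam := by
        have := hdvd.neg_right
        rwa [neg_sub, hmu0] at this
      exact main0 lam h0l hdvd'
    have htne : (lam + mu).toFinset.Nonempty := by
      rw [Multiset.toFinset_nonempty]
      intro h
      have h6 : lam ≤ 0 := h ▸ Multiset.le_add_right lam mu
      exact hlam0 (Multiset.card_eq_zero.mp (Nat.le_zero.mp (by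
        simpa using Multiset.card_le_card h6)))
    set k := (lam + mu).toFinset.min' htne with hkdef
    have hkmem : k ∈ lam + mu := Multiset.mem_toFinset.mp ((lam+mu).toFinset.min'_mem htne)
    have hmin : ∀ c ∈ lam + mu, k ≤ c := fun c hc =>
      Finset.min'_le _ _ (Multiset.mem_toFinset.mpr hc)
    have hk0 : k ≠ 0 := by
      intro h
      rcases Multiset.mem_add.mp hkmem with hh | hh
      · exact h0l (h ▸ hh)
      · exact h0m (h ▸ hh)
    have hminl : ∀ c ∈ lam, k ≤ c := fun c hc => hmin c (Multiset.mem_add.mpr (Or.inl hc))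
    have hminm : ∀ c ∈ mu, k ≤ c := fun c hc => hmin c (Multiset.mem_add.mpr (Or.inr hc))
    have hco := (C_dvd_iff_dvd_coeff _ _).mp hdvd k
    rw [coeff_sub, auxFF_coeff_min k hk0 lam hminl h0l, auxFF_coeff_min k hk0 mu hminm h0m] at hco
    have h1 : ((lam.count k : ℤ) - mu.count k) = 0 := by
      apply Int.eq_zero_of_abs_lt_dvd hco
      have h2 := hrl k
      have h3 := hrm k
      have hP : ((p:ℤ)^m) = ((p^m : ℕ) : ℤ) := by push_cast; ring
      rw [hP, abs_sub_lt_iff]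
      constructor <;> [skip; skip] <;> push_cast <;> omega
    have hcnt : lam.count k = mu.count k := by omega
    have ha1 : 1 ≤ lam.count k := by
      rcases Multiset.mem_add.mp hkmem with hh | hh
      · exact Multiset.count_pos.mpr hh
      · rw [hcnt]
        exact Multiset.count_pos.mpr hh
    have hlel : Multiset.replicate (lam.count k) k ≤ lam :=
      Multiset.le_count_iff_replicate_le.mp (le_refl _)
    have hlem : Multiset.replicate (lam.count k) k ≤ mu :=
      Multiset.le_count_iff_replicate_le.mp (le_of_eq hcnt)
    have hleq : (lam - Multiset.replicate (lam.count k) k) + Multiset.replicate (lam.count k) k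
        = lam := tsub_add_cancel_of_le hlel
    have hmeq : (mu - Multiset.replicate (lam.count k) k) + Multiset.replicate (lam.count k) k
        = mu := tsub_add_cancel_of_le hlem
    have hfac : auxFF lam - auxFF mu = (1 + X^k)^(lam.count k) *
        (auxFF (lam - Multiset.replicate (lam.count k) k) -
         auxFF (mu - Multiset.replicate (lam.count k) k)) := by
      conv_lhs => rw [← hleq, ← hmeq]
      rw [auxFF_add, auxFF_add, auxFF_replicate]
      ring
    haveI : Fact p.Prime := ⟨hp⟩
    have hg : ((1 + X^k)^(lam.count k) : Polynomial ℤ).map (Int.castRingHom (ZMod p)) ≠ 0 := by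
      have hmon : ((1 + X^k)^(lam.count k) : Polynomial ℤ).Monic := (opx_monic hk0).pow _
      exact (hmon.map (Int.castRingHom (ZMod p))).ne_zero
    have hdvd0 : C ((p:ℤ)^m) ∣ auxFF (lam - Multiset.replicate (lam.count k) k) -
        auxFF (mu - Multiset.replicate (lam.count k) k) :=
      cancel_pow_p hp _ hg m _ (by rw [← hfac]; exact hdvd)
    have hca : Multiset.card (lam - Multiset.replicate (lam.count k) k) + lam.count k
        = Multiset.card lam := by
      have h5 := congrArg Multiset.card hleq
      rw [Multiset.card_add, Multiset.card_replicate] at h5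
      exact h5
    have hcb : Multiset.card (mu - Multiset.replicate (lam.count k) k) + lam.count k
        = Multiset.card mu := by
      have h5 := congrArg Multiset.card hmeq
      rw [Multiset.card_add, Multiset.card_replicate] at h5
      exact h5
    have heq0 : lam - Multiset.replicate (lam.count k) k
        = mu - Multiset.replicate (lam.count k) k := by
      refine ih _ _ (by omega) (fun j => lt_of_le_of_lt (Multiset.count_le_of_le j tsub_le_self)
        (hrl j)) (fun j => lt_of_le_of_lt (Multiset.count_le_of_le j tsub_le_self) (hrm j))
        (fun h => h0l (Multiset.mem_of_le tsub_le_self h))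
        (fun h => h0m (Multiset.mem_of_le tsub_le_self h)) hdvd0
    rw [← hleq, ← hmeq, heq0]


end AuxCombinatorics

section AuxRep
open Polynomial

variable {n : ℕ}

abbrev OmegaT (n t : ℕ) := {s : Finset (Fin n) // s.card = t}

instance omegaSMul (n t : ℕ) : SMul (Equiv.Perm (Fin n)) (OmegaT n t) :=
  ⟨fun σ s => ⟨s.1.image σ, by rw [Finset.card_image_of_injective _ σ.injective, s.2]⟩⟩

lemma omega_smul_coe (σ : Equiv.Perm (Fin n)) {t : ℕ} (s : OmegaT n t) :
    (σ • s).1 = s.1.image σ := rfl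

instance omegaMulAction (n t : ℕ) : MulAction (Equiv.Perm (Fin n)) (OmegaT n t) where
  one_smul s := Subtype.ext (by
    rw [omega_smul_coe]
    simp)
  mul_smul σ τ s := Subtype.ext (by
    simp only [omega_smul_coe, Finset.image_image]
    rfl)

noncomputable instance (t : ℕ) : FiniteDimensional ℂ (OmegaT n t →₀ ℂ) :=
  Module.Finite.equiv (Finsupp.linearEquivFunOnFinite ℂ ℂ (OmegaT n t)).symm

noncomputable def repV (n t : ℕ) : FDRep ℂ (Equiv.Perm (Fin n)) :=
  FDRep.of (Representation.ofMulAction ℂ (Equiv.Perm (Fin n)) (OmegaT n t))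

lemma trace_ofMulAction {G X : Type} [Group G] [Fintype X] [DecidableEq X] [MulAction G X]
    (g : G) :
    LinearMap.trace ℂ (MonoidAlgebra ℂ X) (Representation.ofMulAction ℂ G X g) =
      ((Finset.univ.filter (fun x : X => g • x = x)).card : ℂ) := by
  classical
  rw [LinearMap.trace_eq_matrix_trace ℂ (MonoidAlgebra.basis X ℂ)]
  rw [Matrix.trace]
  have hdiag : ∀ x : X, (LinearMap.toMatrix (MonoidAlgebra.basis X ℂ) (MonoidAlgebra.basis X ℂ)
      (Representation.ofMulAction ℂ G X g)).diag x = if g • x = x then 1 else 0 := by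
    intro x
    rw [Matrix.diag, LinearMap.toMatrix_apply]
    simp only [MonoidAlgebra.basis_apply, Representation.ofMulAction_single]
    simp [MonoidAlgebra.basis, MonoidAlgebra.coeffLinearEquiv, Finsupp.single_apply]
  rw [Finset.sum_congr rfl (fun x _ => hdiag x)]
  rw [Finset.sum_boole]

lemma character_repV (t : ℕ) (σ : Equiv.Perm (Fin n)) :
    (repV n t).character σ =
      ((Finset.univ.filter (fun s : OmegaT n t => σ • s = s)).card : ℂ) := by
  rw [FDRep.character]
  exact trace_ofMulAction σ

def countFix (n t : ℕ) (σ : Equiv.Perm (Fin n)) : ℕ :=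
  ((Finset.univ : Finset (Finset (Fin n))).filter (fun s => s.image ⇑σ = s ∧ s.card = t)).card

lemma card_fix_eq_countFix (t : ℕ) (σ : Equiv.Perm (Fin n)) :
    (Finset.univ.filter (fun s : OmegaT n t => σ • s = s)).card = countFix n t σ := by
  rw [countFix]
  apply Finset.card_bij (fun s _ => s.1)
  · intro s hs
    simp only [Finset.mem_filter, Finset.mem_univ, true_and] at hs ⊢
    refine ⟨?_, s.2⟩
    rw [← omega_smul_coe σ s, hs]
  · intro a _ b _ hab
    exact Subtype.ext hab
  · intro s hs
    simp only [Finset.mem_filter, Finset.mem_univ, true_and] at hs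
    exact ⟨⟨s, hs.2⟩, by
      simp only [Finset.mem_filter, Finset.mem_univ, true_and]
      exact Subtype.ext hs.1, rfl⟩

def blocks (σ : Equiv.Perm (Fin n)) : Finset (Finset (Fin n)) :=
  (σ.cycleFactorsFinset.image Equiv.Perm.support) ∪ ((σ.supportᶜ).image (fun x => {x}))

lemma blocks_nonempty {σ : Equiv.Perm (Fin n)} {b : Finset (Fin n)} (hb : b ∈ blocks σ) :
    b.Nonempty := by
  rcases Finset.mem_union.mp hb with h | h
  · obtain ⟨c, hc, rfl⟩ := Finset.mem_image.mp h
    have h2 := ((Equiv.Perm.mem_cycleFactorsFinset_iff.mp hc).1).two_le_card_support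
    exact Finset.card_pos.mp (by omega)
  · obtain ⟨x, _, rfl⟩ := Finset.mem_image.mp h
    exact ⟨x, Finset.mem_singleton_self x⟩

lemma blocks_disjoint {σ : Equiv.Perm (Fin n)} {b b' : Finset (Fin n)}
    (hb : b ∈ blocks σ) (hb' : b' ∈ blocks σ) (hne : b ≠ b') : Disjoint b b' := by
  rcases Finset.mem_union.mp hb with h | h <;> rcases Finset.mem_union.mp hb' with h' | h'
  · obtain ⟨c, hc, rfl⟩ := Finset.mem_image.mp h
    obtain ⟨c', hc', rfl⟩ := Finset.mem_image.mp h'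
    have hcc : c ≠ c' := fun hcc => hne (by rw [hcc])
    exact Equiv.Perm.Disjoint.disjoint_support
      (Equiv.Perm.cycleFactorsFinset_pairwise_disjoint σ hc hc' hcc)
  · obtain ⟨c, hc, rfl⟩ := Finset.mem_image.mp h
    obtain ⟨x, hx, rfl⟩ := Finset.mem_image.mp h'
    rw [Finset.disjoint_singleton_right]
    intro hmem
    exact (Finset.mem_compl.mp hx) (Equiv.Perm.mem_cycleFactorsFinset_support_le hc hmem)
  · obtain ⟨x, hx, rfl⟩ := Finset.mem_image.mp h
    obtain ⟨c, hc, rfl⟩ := Finset.mem_image.mp h'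
    rw [Finset.disjoint_singleton_left]
    intro hmem
    exact (Finset.mem_compl.mp hx) (Equiv.Perm.mem_cycleFactorsFinset_support_le hc hmem)
  · obtain ⟨x, _, rfl⟩ := Finset.mem_image.mp h
    obtain ⟨y, _, rfl⟩ := Finset.mem_image.mp h'
    rw [Finset.disjoint_singleton_left, Finset.mem_singleton]
    exact fun hxy => hne (by rw [hxy])

lemma blocks_cover (σ : Equiv.Perm (Fin n)) (x : Fin n) : ∃ b ∈ blocks σ, x ∈ b := by
  by_cases hx : x ∈ σ.support
  · refine ⟨(σ.cycleOf x).support, Finset.mem_union_left _ (Finset.mem_image.mpr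
      ⟨σ.cycleOf x, Equiv.Perm.cycleOf_mem_cycleFactorsFinset_iff.mpr hx, rfl⟩), ?_⟩
    exact Equiv.Perm.mem_support_cycleOf_iff.mpr ⟨Equiv.Perm.SameCycle.refl σ x, hx⟩
  · exact ⟨{x}, Finset.mem_union_right _ (Finset.mem_image.mpr ⟨x, Finset.mem_compl.mpr hx, rfl⟩),
      Finset.mem_singleton_self x⟩

lemma blocks_invariant {σ : Equiv.Perm (Fin n)} {b : Finset (Fin n)} (hb : b ∈ blocks σ) :
    b.image ⇑σ = b := by
  rcases Finset.mem_union.mp hb with h | h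
  · obtain ⟨c, hc, rfl⟩ := Finset.mem_image.mp h
    apply Finset.eq_of_subset_of_card_le
    · intro y hy
      obtain ⟨a, ha, rfl⟩ := Finset.mem_image.mp hy
      have hceq : c = σ.cycleOf a := Equiv.Perm.cycle_is_cycleOf ha hc
      have has : a ∈ σ.support := Equiv.Perm.mem_cycleFactorsFinset_support_le hc ha
      rw [hceq]
      exact Equiv.Perm.mem_support_cycleOf_iff.mpr
        ⟨Equiv.Perm.sameCycle_apply_right.mpr (Equiv.Perm.SameCycle.refl σ a), has⟩
    · rw [Finset.card_image_of_injective _ σ.injective]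
  · obtain ⟨x, hx, rfl⟩ := Finset.mem_image.mp h
    have : σ x = x := Equiv.Perm.notMem_support.mp (Finset.mem_compl.mp hx)
    rw [Finset.image_singleton, this]

lemma invariant_block_subset {σ : Equiv.Perm (Fin n)} {s : Finset (Fin n)}
    (hs : s.image ⇑σ = s) {b : Finset (Fin n)} (hb : b ∈ blocks σ) {x : Fin n}
    (hx : x ∈ b) (hxs : x ∈ s) : b ⊆ s := by
  have hstep : ∀ z ∈ s, σ z ∈ s := fun z hz => hs ▸ Finset.mem_image_of_mem _ hz
  have hpow : ∀ (i : ℕ), (σ ^ i) x ∈ s := by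
    intro i
    induction i with
    | zero => simpa using hxs
    | succ i ih =>
      rw [pow_succ']
      simpa using hstep _ ih
  rcases Finset.mem_union.mp hb with h | h
  · obtain ⟨c, hc, rfl⟩ := Finset.mem_image.mp h
    intro y hy
    have hceq : c = σ.cycleOf x := Equiv.Perm.cycle_is_cycleOf hx hc
    have hsc : σ.SameCycle x y := by
      rw [hceq] at hy
      exact (Equiv.Perm.mem_support_cycleOf_iff.mp hy).1
    obtain ⟨i, _, rfl⟩ := hsc.exists_pow_eq'
    exact hpow i
  · obtain ⟨z, _, rfl⟩ := Finset.mem_image.mp h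
    rw [Finset.mem_singleton.mp hx] at hxs
    intro y hy
    rw [Finset.mem_singleton.mp hy]
    exact hxs

lemma blocks_disjoint_parts (σ : Equiv.Perm (Fin n)) :
    Disjoint (σ.cycleFactorsFinset.image Equiv.Perm.support)
      ((σ.supportᶜ).image (fun x => ({x} : Finset (Fin n)))) := by
  rw [Finset.disjoint_left]
  intro b hb hb'
  obtain ⟨c, hc, rfl⟩ := Finset.mem_image.mp hb
  obtain ⟨x, _, hx⟩ := Finset.mem_image.mp hb'
  have h2 := ((Equiv.Perm.mem_cycleFactorsFinset_iff.mp hc).1).two_le_card_support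
  rw [← hx] at h2
  simp at h2

lemma blocks_eq_disjUnion (σ : Equiv.Perm (Fin n)) :
    blocks σ = (σ.cycleFactorsFinset.image Equiv.Perm.support).disjUnion
      ((σ.supportᶜ).image (fun x => ({x} : Finset (Fin n)))) (blocks_disjoint_parts σ) := by
  rw [Finset.disjUnion_eq_union]
  rfl

lemma blocks_card_multiset (σ : Equiv.Perm (Fin n)) :
    (blocks σ).val.map Finset.card = fullCycleType σ := by
  rw [blocks_eq_disjUnion]
  rw [show ((σ.cycleFactorsFinset.image Equiv.Perm.support).disjUnion
      ((σ.supportᶜ).image (fun x => ({x} : Finset (Fin n)))) (blocks_disjoint_parts σ)).val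
      = (σ.cycleFactorsFinset.image Equiv.Perm.support).val +
        ((σ.supportᶜ).image (fun x => ({x} : Finset (Fin n)))).val from rfl, Multiset.map_add]
  have h1 : (σ.cycleFactorsFinset.image Equiv.Perm.support).val.map Finset.card
      = σ.cycleType := by
    rw [Finset.image_val_of_injOn, Multiset.map_map, Equiv.Perm.cycleType_def]
    intro c hc c' hc' hcc
    by_contra hne
    have hdisj := Equiv.Perm.Disjoint.disjoint_support
      (Equiv.Perm.cycleFactorsFinset_pairwise_disjoint σ hc hc' hne)
    rw [hcc] at hdisj
    have h2 := ((Equiv.Perm.mem_cycleFactorsFinset_iff.mp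
      (by exact hc' : c' ∈ σ.cycleFactorsFinset)).1).two_le_card_support
    rw [disjoint_self] at hdisj
    rw [hdisj] at h2
    simp at h2
  have h2 : ((σ.supportᶜ).image (fun x => ({x} : Finset (Fin n)))).val.map Finset.card
      = Multiset.replicate (n - σ.cycleType.sum) 1 := by
    rw [Finset.image_val_of_injOn, Multiset.map_map]
    · have : (Finset.card ∘ fun x : Fin n => ({x} : Finset (Fin n))) = fun _ => 1 := by
        funext x; simp
      rw [this, Multiset.map_const']
      congr 1
      rw [Equiv.Perm.sum_cycleType]
      simp [Finset.card_compl]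
    · intro x _ y _ hxy
      simpa using hxy
  rw [h1, h2, fullCycleType]

lemma auxFF_fullCycleType (σ : Equiv.Perm (Fin n)) :
    auxFF (fullCycleType σ) =
      ∑ s ∈ Finset.univ.filter (fun s : Finset (Fin n) => s.image ⇑σ = s), X ^ s.card := by
  have h1 : auxFF (fullCycleType σ) = ∏ b ∈ blocks σ, (X ^ b.card + 1) := by
    rw [auxFF, ← blocks_card_multiset, Finset.prod]
    rw [Multiset.map_map]
    congr 1
    apply Multiset.map_congr rfl
    intro b _
    simp [add_comm]
  rw [h1, Finset.prod_add]
  have h2 : ∀ T ∈ (blocks σ).powerset,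
      (∏ b ∈ T, X ^ b.card) * (∏ b ∈ blocks σ \ T, (1 : Polynomial ℤ))
      = X ^ ((T.biUnion id).card) := by
    intro T hT
    rw [Finset.prod_const_one, mul_one, Finset.prod_pow_eq_pow_sum]
    congr 1
    rw [Finset.card_biUnion]
    · simp
    · intro b hb b' hb' hne
      exact blocks_disjoint (Finset.mem_powerset.mp hT hb) (Finset.mem_powerset.mp hT hb') hne
  rw [Finset.sum_congr rfl h2]
  apply Finset.sum_nbij' (fun T => T.biUnion id) (fun s => (blocks σ).filter (· ⊆ s))
  · intro T hT
    simp only [Finset.mem_filter, Finset.mem_univ, true_and]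
    rw [Finset.biUnion_image]
    apply Finset.biUnion_congr rfl
    intro b hb
    exact blocks_invariant (Finset.mem_powerset.mp hT hb)
  · intro s _
    exact Finset.mem_powerset.mpr (Finset.filter_subset _ _)
  · intro T hT
    ext b
    simp only [Finset.mem_filter]
    constructor
    · rintro ⟨hbB, hbsub⟩
      obtain ⟨x, hx⟩ := blocks_nonempty hbB
      obtain ⟨b', hb', hxb'⟩ := Finset.mem_biUnion.mp (hbsub hx)
      have hb'B := Finset.mem_powerset.mp hT hb'
      by_cases hbb : b = b'
      · rwa [hbb]
      · exact absurd hxb' (Finset.disjoint_left.mp (blocks_disjoint hbB hb'B hbb) hx)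
    · intro hb
      exact ⟨Finset.mem_powerset.mp hT hb, Finset.subset_biUnion_of_mem id hb⟩
  · intro s hs
    simp only [Finset.mem_filter, Finset.mem_univ, true_and] at hs
    ext x
    constructor
    · intro hx
      obtain ⟨b, hb, hxb⟩ := Finset.mem_biUnion.mp hx
      exact (Finset.mem_filter.mp hb).2 hxb
    · intro hx
      obtain ⟨b, hb, hxb⟩ := blocks_cover σ x
      refine Finset.mem_biUnion.mpr ⟨b, Finset.mem_filter.mpr ⟨hb, ?_⟩, hxb⟩
      exact invariant_block_subset hs hb hxb hx
  · intro T _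
    rfl

lemma auxFF_coeff_countFix (σ : Equiv.Perm (Fin n)) (t : ℕ) :
    (auxFF (fullCycleType σ)).coeff t = (countFix n t σ : ℤ) := by
  rw [auxFF_fullCycleType, Polynomial.finset_sum_coeff]
  simp only [Polynomial.coeff_X_pow]
  rw [Finset.sum_boole, Finset.filter_filter, countFix]
  congr 1
  apply congrArg Finset.card
  apply Finset.filter_congr
  intro s _
  rw [and_congr_right_iff]
  intro _
  exact eq_comm


lemma zero_not_mem_fullCycleType (σ : Equiv.Perm (Fin n)) : 0 ∉ fullCycleType σ := by
  intro h
  rcases Multiset.mem_add.mp h with h | h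
  · have := Equiv.Perm.two_le_of_mem_cycleType h; omega
  · have := Multiset.eq_of_mem_replicate h; omega

lemma master_dvd (p m : ℕ) (σ σ' : Equiv.Perm (Fin n))
    (hcong : ∀ V : FDRep ℂ (Equiv.Perm (Fin n)),
      ∃ z : ℤ, V.character σ - V.character σ' = ((p : ℂ)) ^ m * (z : ℂ)) :
    C ((p:ℤ)^m) ∣ auxFF (fullCycleType σ) - auxFF (fullCycleType σ') := by
  rw [C_dvd_iff_dvd_coeff]
  intro t
  rw [coeff_sub, auxFF_coeff_countFix, auxFF_coeff_countFix]
  obtain ⟨z, hz⟩ := hcong (repV n t)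
  rw [character_repV, character_repV, card_fix_eq_countFix, card_fix_eq_countFix] at hz
  refine ⟨z, ?_⟩
  have h2 : (((countFix n t σ : ℤ) - countFix n t σ' : ℤ) : ℂ)
      = (((p:ℤ)^m * z : ℤ) : ℂ) := by
    push_cast
    push_cast at hz
    linear_combination hz
  exact_mod_cast h2

end AuxRep

/-- If `χ σ ≡ χ σ' (mod p^m)` for every character `χ` of `S_n`, then the
cycle types of `σ` and `σ'` are related by the equivalence relation generated by replacing
`p^m` parts of size `k` with `p^(m-1)` parts of size `pk`. -/
theorem stmt_13 (p m n : ℕ) (hp : p.Prime) (hm : 1 ≤ m)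
    (σ σ' : Equiv.Perm (Fin n))
    (hcong : ∀ V : FDRep ℂ (Equiv.Perm (Fin n)),
      ∃ z : ℤ, V.character σ - V.character σ' = ((p : ℂ)) ^ m * (z : ℂ)) :
    Relation.EqvGen
      (fun lam mu : Multiset ℕ => ∃ k : ℕ, 1 ≤ k ∧ Multiset.replicate (p ^ m) k ≤ lam ∧
        mu = lam - Multiset.replicate (p ^ m) k + Multiset.replicate (p ^ (m - 1)) (p * k))
      (fullCycleType σ) (fullCycleType σ') := by
  have hdvd := master_dvd p m σ σ' hcong
  obtain ⟨lamr, hchainl, hredl, h0l, hdvdl⟩ := reduce_aux hp hm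
    (Multiset.card (fullCycleType σ)) (fullCycleType σ) le_rfl (zero_not_mem_fullCycleType σ)
  obtain ⟨mur, hchainm, hredm, h0m, hdvdm⟩ := reduce_aux hp hm
    (Multiset.card (fullCycleType σ')) (fullCycleType σ') le_rfl (zero_not_mem_fullCycleType σ')
  have hdvdr : Polynomial.C ((p:ℤ)^m) ∣ auxFF lamr - auxFF mur := by
    have h1 := dvd_sub hdvd hdvdl
    -- h1 : ∣ (FFσ - FFσ') - (FFσ - FFlamr) = FFlamr - FFσ'
    rw [sub_sub_sub_cancel_left] at h1
    have h2 := dvd_add h1 hdvdm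
    -- (FFlamr - FFσ') + (FFσ' - FFmur) = FFlamr - FFmur
    rwa [sub_add_sub_cancel] at h2
  have heq : lamr = mur := core_aux hp hm (Multiset.card lamr + Multiset.card mur) lamr mur
    le_rfl hredl hredm h0l h0m hdvdr
  have h9 : Relation.EqvGen (mRel p m) mur (fullCycleType σ') :=
    Relation.EqvGen.symm _ _ hchainm
  rw [← heq] at h9
  exact Relation.EqvGen.trans _ _ _ hchainl h9
end

section
/- Let G be a finite group, p a prime, and suppose g, g' ∈ G are related by the equivalence relation ∼_m generated by conjugation in G and by g ∼ g·h^(p^{m-1}) whenever h commutes with g and has p-power order. Then for every virtual character χ of G with values in ℤ, χ(g) ≡ χ(g') (mod p^m). -/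
open Finset Polynomial

/-- Splitting a sum over `range (a+b)`. -/
lemma my_sum_range_add {M : Type*} [AddCommMonoid M] (g : ℕ → M) (a b : ℕ) :
    ∑ t ∈ range (a + b), g t = (∑ t ∈ range a, g t) + ∑ s ∈ range b, g (a + s) := by
  induction b with
  | zero => simp
  | succ b ih => rw [Nat.add_succ, sum_range_succ, sum_range_succ, ih, add_assoc]

/-- Double-counting a sum over `range (a*b)`. -/
lemma my_sum_range_mul {M : Type*} [AddCommMonoid M] (g : ℕ → M) (a b : ℕ) :
    ∑ t ∈ range (a * b), g t = ∑ w ∈ range b, ∑ r ∈ range a, g (r + a * w) := by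
  induction b with
  | zero => simp
  | succ b ih =>
    rw [Nat.mul_succ, my_sum_range_add, ih, sum_range_succ]
    congr 1
    exact Finset.sum_congr rfl fun r _ => by rw [Nat.add_comm]

/-- Shift invariance of a full-period sum of a periodic function. -/
lemma my_sum_shift {M : Type*} [AddCommGroup M] (g : ℕ → M) (n : ℕ)
    (hg : ∀ u, g (u + n) = g u) (t : ℕ) :
    ∑ s ∈ range n, g (t + s) = ∑ s ∈ range n, g s := by
  induction t with
  | zero => simp
  | succ t ih =>
    have h1 : ∑ s ∈ range (n+1), g (t + s) = (∑ s ∈ range n, g (t + (s+1))) + g (t + 0) :=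
      Finset.sum_range_succ' _ _
    have h2 : ∑ s ∈ range (n+1), g (t + s) = (∑ s ∈ range n, g (t + s)) + g (t + n) :=
      Finset.sum_range_succ _ _
    have h3 : ∑ s ∈ range n, g (t + 1 + s) = ∑ s ∈ range n, g (t + (s+1)) := by
      apply Finset.sum_congr rfl
      intro s _
      congr 1
      omega
    have h4 : g (t + n) = g (t + 0) := by simpa using hg t
    have h5 : ∑ s ∈ range n, g (t + (s+1)) = ∑ s ∈ range n, g (t + s) := by
      have := h1.symm.trans h2
      rw [h4] at this
      exact add_right_cancel this
    rw [h3, h5, ih]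

/-- The trace of an endomorphism of a finite dimensional complex vector space
satisfying `φ^(K+1) = φ` is an algebraic integer. -/
lemma my_trace_integral {V : Type*} [AddCommGroup V] [Module ℂ V] [FiniteDimensional ℂ V]
    (φ : V →ₗ[ℂ] V) (K : ℕ) (hK : 1 ≤ K) (hφ : φ ^ (K + 1) = φ) :
    IsIntegral ℤ (LinearMap.trace ℂ V φ) := by
  classical
  let b := Module.finBasis ℂ V
  let E := LinearMap.toMatrixAlgEquiv b
  set A := E φ with hAdef
  have hApow : A ^ (K + 1) = A := by rw [hAdef, ← map_pow, hφ]
  have htr : LinearMap.trace ℂ V φ = A.trace := LinearMap.trace_eq_matrix_trace ℂ b φ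
  rw [htr, Matrix.trace_eq_sum_roots_charpoly]
  apply IsIntegral.multiset_sum
  intro z hz
  have hzr : (Matrix.charpoly A).IsRoot z := isRoot_of_mem_roots hz
  -- z is an eigenvalue
  have hdet : (Matrix.diagonal (fun _ => z) - A).det = 0 := by
    have h1 : Polynomial.eval z A.charpoly = 0 := hzr
    rw [Matrix.charpoly] at h1
    have h2 := (Polynomial.evalRingHom z).map_det (Matrix.charmatrix A)
    have h3 : (Matrix.charmatrix A).map (Polynomial.evalRingHom z)
        = Matrix.diagonal (fun _ => z) - A := by
      ext i j
      by_cases hij : i = j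
      · subst hij
        simp [Matrix.charmatrix_apply_eq, Matrix.map_apply, Matrix.sub_apply]
      · simp [Matrix.charmatrix_apply_ne _ _ _ hij, Matrix.map_apply, Matrix.sub_apply,
          Matrix.diagonal_apply_ne _ hij]
    rw [RingHom.mapMatrix_apply, h3] at h2
    rw [← h2]
    exact h1
  obtain ⟨v, hv0, hv⟩ := (Matrix.exists_mulVec_eq_zero_iff).mpr hdet
  have hAv : A.mulVec v = z • v := by
    funext i
    have := congrFun hv i
    rw [Matrix.sub_mulVec] at this
    have h4 : (Matrix.diagonal (fun _ => z)).mulVec v i = z * v i :=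
      Matrix.mulVec_diagonal _ _ _
    have h5 : ((Matrix.diagonal fun _ => z).mulVec v - A.mulVec v) i
        = (Matrix.diagonal (fun _ => z)).mulVec v i - A.mulVec v i := rfl
    rw [Pi.zero_apply, h5, h4] at this
    have h6 : A.mulVec v i = z * v i := (sub_eq_zero.mp this).symm
    simp [h6]
  have hpow : ∀ k, (A ^ (k+1)).mulVec v = z ^ (k+1) • v := by
    intro k
    induction k with
    | zero => simpa using hAv
    | succ k ih =>
      have : A ^ (k+2) = A ^ (k+1) * A := pow_succ A (k+1)
      rw [this, ← Matrix.mulVec_mulVec, hAv, Matrix.mulVec_smul, ih, smul_smul, ← pow_succ']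
  have hzz : z ^ (K+1) = z := by
    have h7 := hpow K
    rw [hApow, hAv] at h7
    obtain ⟨i, hi⟩ := Function.ne_iff.mp hv0
    have := congrFun h7 i
    simp only [Pi.smul_apply, smul_eq_mul] at this
    exact (mul_right_cancel₀ hi this).symm
  refine ⟨X ^ (K+1) - X, ?_, ?_⟩
  · apply Polynomial.monic_X_pow_sub
    rw [Polynomial.degree_X]
    exact_mod_cast Nat.lt_succ_of_le hK
  · simp [hzz]

/-- The "Fourier coefficients" of the function `t ↦ χ(g h^t)` are algebraic integers. -/
lemma my_beta_integral {G : Type} [Group G] [Fintype G] (V : FDRep ℂ G) (g h : G)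
    (hc : Commute g h) (n : ℕ) (hn : 0 < n) (hh : h ^ n = 1) (η : ℂ) (hη : η ^ n = 1) :
    IsIntegral ℤ ((n : ℂ)⁻¹ * ∑ t ∈ range n, η ^ t * V.character (g * h ^ t)) := by
  classical
  set a : V →ₗ[ℂ] V := V.ρ g with ha
  set bb : V →ₗ[ℂ] V := V.ρ h with hb
  have hbn : bb ^ n = 1 := by rw [hb, ← map_pow, hh, map_one]
  set T : V →ₗ[ℂ] V := ∑ t ∈ range n, η ^ t • bb ^ t with hT
  -- T * T = n • T
  have hGper : ∀ u, η ^ (u + n) • bb ^ (u + n) = η ^ u • bb ^ u := by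
    intro u
    rw [pow_add, pow_add, hη, hbn, mul_one, mul_one]
  have hTT : T * T = (n : ℂ) • T := by
    rw [hT, Finset.sum_mul_sum]
    have h1 : ∀ t ∈ range n, ∀ s ∈ range n,
        (η ^ t • bb ^ t) * (η ^ s • bb ^ s) = η ^ (t + s) • bb ^ (t + s) := by
      intro t _ s _
      rw [smul_mul_smul_comm, ← pow_add, ← pow_add]
    rw [Finset.sum_congr rfl fun t ht => Finset.sum_congr rfl fun s hs => h1 t ht s hs]
    have h2 : ∀ t ∈ range n, ∑ s ∈ range n, η ^ (t + s) • bb ^ (t + s)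
        = ∑ s ∈ range n, η ^ s • bb ^ s := fun t _ =>
      my_sum_shift (fun u => η ^ u • bb ^ u) n hGper t
    rw [Finset.sum_congr rfl h2, Finset.sum_const, card_range]
    rw [← Nat.cast_smul_eq_nsmul ℂ]
  set P : V →ₗ[ℂ] V := (n : ℂ)⁻¹ • T with hP
  have hn0 : (n : ℂ) ≠ 0 := Nat.cast_ne_zero.mpr hn.ne'
  have hPP : P * P = P := by
    rw [hP, smul_mul_smul_comm, hTT, smul_smul]
    congr 1
    field_simp
  have hcomm : Commute a P := by
    have h3 : Commute a bb := by
      rw [ha, hb, commute_iff_eq, ← map_mul, ← map_mul, hc.eq]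
    exact (Commute.sum_right _ _ _ fun t _ =>
      ((h3.pow_right t).smul_right _)).smul_right _
  set M : V →ₗ[ℂ] V := a * P with hM
  set K := Fintype.card G with hK
  have hK1 : 1 ≤ K := Fintype.card_pos
  have haK : a ^ K = 1 := by rw [ha, ← map_pow, pow_card_eq_one, map_one]
  have hPpow : ∀ k, P ^ (k + 1) = P := by
    intro k
    induction k with
    | zero => rw [pow_one]
    | succ k ih => rw [pow_succ, ih, hPP]
  have hMpow : M ^ (K + 1) = M := by
    rw [hM, hcomm.mul_pow, hPpow, pow_succ, haK, one_mul]
  have hint := my_trace_integral M K hK1 hMpow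
  convert hint using 1
  -- trace M = n⁻¹ * Σ η^t χ(g h^t)
  have hM2 : M = ∑ t ∈ range n, ((n : ℂ)⁻¹ * η ^ t) • V.ρ (g * h ^ t) := by
    rw [hM, hP, hT, mul_smul_comm, Finset.mul_sum]
    rw [smul_sum]
    congr 1
    funext t
    rw [mul_smul_comm, smul_smul]
    congr 1
    rw [map_mul, map_pow]
  rw [hM2, map_sum, Finset.mul_sum]
  congr 1
  funext t
  rw [LinearMap.map_smul, smul_eq_mul, mul_assoc]
  rfl

/-- Coefficientwise congruences extracted from integrality of a cyclotomic combination. -/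
lemma my_coeff_congr {K : Type*} [Field K] [CharZero K] (p e c : ℕ) (hp : p.Prime)
    (he : 1 ≤ e) (ζ : K) (hζ : IsPrimitiveRoot ζ (p ^ e))
    (Hadj : ∀ y : K, IsIntegral ℤ y → ∃ q : ℤ[X], Polynomial.aeval ζ q = y)
    (A : ℕ → ℤ) (hA : ∀ r, A (r + p ^ e) = A r)
    (hint : IsIntegral ℤ (((p : K) ^ c)⁻¹ * ∑ r ∈ range (p ^ e), (A r : K) * ζ ^ r)) :
    ∀ r k : ℕ, (p : ℤ) ^ c ∣ A (r + p ^ (e - 1) * k) - A r := by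
  have hp2 : 2 ≤ p := hp.two_le
  set a : ℕ := p ^ (e - 1) with haa
  set φt : ℕ := a * (p - 1) with hφt
  have hape : a * p = p ^ e := by
    rw [haa, ← pow_succ]
    congr 1
    omega
  have hsplit : φt + a = p ^ e := by
    calc φt + a = a * (p - 1 + 1) := by rw [hφt, Nat.mul_succ]
    _ = a * p := by congr 1; omega
    _ = p ^ e := hape
  have hφpos : 0 < φt := by
    have : 0 < a := pow_pos (by omega) _
    have : 1 ≤ p - 1 := by omega
    calc 0 < a * 1 := by omega
    _ ≤ a * (p - 1) := Nat.mul_le_mul_left _ this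
  have hapos : 0 < a := pow_pos (by omega) _
  -- the primitive p-th root ζ^a kills geometric sums
  have hξp : (ζ ^ a) ^ p = 1 := by rw [← pow_mul, hape, hζ.pow_eq_one]
  have hξ1 : ζ ^ a ≠ 1 := by
    apply hζ.pow_ne_one_of_pos_of_lt hapos.ne'
    rw [← hape]
    have h := (Nat.mul_lt_mul_left hapos).mpr (show 1 < p by omega)
    simpa using h
  have hgeom : ∑ u ∈ range p, (ζ ^ a) ^ u = 0 := by
    have h1 : (∑ u ∈ range p, (ζ ^ a) ^ u) * (ζ ^ a - 1) = (ζ ^ a) ^ p - 1 :=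
      geom_sum_mul (ζ ^ a) p
    rw [hξp, sub_self] at h1
    rcases mul_eq_zero.mp h1 with h | h
    · exact h
    · exact absurd (sub_eq_zero.mp h) hξ1
  -- Claim 1 : rewrite the sum using reduced coefficients
  set d : ℕ → ℤ := fun j => A j - A (φt + j % a) with hd
  have claim1 : ∑ r ∈ range (p ^ e), (A r : K) * ζ ^ r
      = ∑ j ∈ range φt, (d j : K) * ζ ^ j := by
    rw [← hsplit, my_sum_range_add]
    have hz : (∑ j ∈ range φt, ((A (φt + j % a) : K)) * ζ ^ j)
        + ∑ s ∈ range a, (A (φt + s) : K) * ζ ^ (φt + s) = 0 := by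
      have h1 : ∑ j ∈ range φt, ((A (φt + j % a) : K)) * ζ ^ j
          = ∑ w ∈ range (p - 1), ∑ s ∈ range a, (A (φt + s) : K) * ζ ^ s * (ζ ^ a) ^ w := by
        rw [hφt, my_sum_range_mul]
        apply Finset.sum_congr rfl
        intro w _
        apply Finset.sum_congr rfl
        intro s hs
        have hsa : s < a := mem_range.mp hs
        have hmod : (s + a * w) % a = s := by
          rw [Nat.add_mul_mod_self_left, Nat.mod_eq_of_lt hsa]
        rw [hmod, pow_add, pow_mul, mul_assoc]
      have h2 : ∑ s ∈ range a, (A (φt + s) : K) * ζ ^ (φt + s)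
          = ∑ s ∈ range a, (A (φt + s) : K) * ζ ^ s * (ζ ^ a) ^ (p - 1) := by
        apply Finset.sum_congr rfl
        intro s _
        have : φt + s = s + a * (p - 1) := by omega
        rw [this, pow_add, pow_mul, ← mul_assoc]
      rw [h1, h2, Finset.sum_comm]
      rw [← Finset.sum_add_distrib]
      have h3 : ∀ s ∈ range a, (∑ w ∈ range (p-1), (A (φt + s) : K) * ζ ^ s * (ζ ^ a) ^ w)
          + (A (φt + s) : K) * ζ ^ s * (ζ ^ a) ^ (p - 1)
          = (A (φt + s) : K) * ζ ^ s * ∑ u ∈ range p, (ζ ^ a) ^ u := by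
        intro s _
        have hp1 : p - 1 + 1 = p := by omega
        rw [Finset.mul_sum]
        conv_rhs => rw [← hp1, sum_range_succ, ← Finset.mul_sum]
        rw [Finset.mul_sum]
      rw [Finset.sum_congr rfl h3]
      simp [hgeom]
    have hds : ∑ j ∈ range φt, (d j : K) * ζ ^ j
        = (∑ j ∈ range φt, (A j : K) * ζ ^ j)
          - ∑ j ∈ range φt, ((A (φt + j % a) : K)) * ζ ^ j := by
      rw [← Finset.sum_sub_distrib]
      apply Finset.sum_congr rfl
      intro j _
      rw [hd]
      push_cast
      ring
    rw [hds]
    have := hz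
    linear_combination this
  -- φt is the totient of p^e, the degree of the minimal polynomial of ζ
  have htot : Nat.totient (p ^ e) = φt := by
    rw [Nat.totient_prime_pow hp (by omega : 0 < e), hφt, haa]
  have hpe0 : 0 < p ^ e := pow_pos (by omega) _
  have hζint : IsIntegral ℤ ζ := hζ.isIntegral hpe0
  have hmin : cyclotomic (p ^ e) ℤ = minpoly ℤ ζ := cyclotomic_eq_minpoly hζ hpe0
  have hminq : cyclotomic (p ^ e) ℚ = minpoly ℚ ζ := cyclotomic_eq_minpoly_rat hζ hpe0
  -- the integral element written in the power basis
  obtain ⟨q, hq⟩ := Hadj _ hint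
  set rem : ℤ[X] := q %ₘ cyclotomic (p ^ e) ℤ with hrem
  have hremdeg : rem.natDegree < φt := by
    rcases eq_or_ne rem 0 with h0 | h0
    · rw [h0]
      simpa using hφpos
    · rw [natDegree_lt_iff_degree_lt h0]
      have h1 : rem.degree < (cyclotomic (p ^ e) ℤ).degree :=
        degree_modByMonic_lt q (cyclotomic.monic _ _)
      rwa [degree_cyclotomic, htot] at h1
  have haevalrem : Polynomial.aeval ζ rem
      = ((p : K) ^ c)⁻¹ * ∑ r ∈ range (p ^ e), (A r : K) * ζ ^ r := by
    have h1 := Polynomial.modByMonic_add_div q (cyclotomic (p ^ e) ℤ)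
    have h2 : Polynomial.aeval ζ (cyclotomic (p ^ e) ℤ) = 0 := by
      rw [hmin]
      exact minpoly.aeval ℤ ζ
    calc Polynomial.aeval ζ rem
        = Polynomial.aeval ζ (rem + cyclotomic (p ^ e) ℤ * (q /ₘ cyclotomic (p ^ e) ℤ)) := by
          rw [map_add, map_mul, h2, zero_mul, add_zero]
      _ = Polynomial.aeval ζ q := by rw [hrem, h1]
      _ = _ := hq
  have hY : ((p : K) ^ c)⁻¹ * ∑ r ∈ range (p ^ e), (A r : K) * ζ ^ r
      = ∑ j ∈ range φt, (rem.coeff j : K) * ζ ^ j := by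
    rw [← haevalrem, Polynomial.aeval_eq_sum_range' hremdeg]
    apply Finset.sum_congr rfl
    intro j _
    rw [zsmul_eq_mul]
  have hpc0 : ((p : K) ^ c) ≠ 0 := pow_ne_zero _ (Nat.cast_ne_zero.mpr (by omega))
  -- linear relation between the d's and p^c times integer coefficients
  have hrel : ∑ j ∈ range φt, ((d j - p ^ c * rem.coeff j : ℤ) : K) * ζ ^ j = 0 := by
    have h1 : ∑ r ∈ range (p ^ e), (A r : K) * ζ ^ r
        = (p : K) ^ c * ∑ j ∈ range φt, (rem.coeff j : K) * ζ ^ j := by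
      rw [← hY, mul_comm (((p : K) ^ c)⁻¹) _]
      field_simp
    rw [claim1] at h1
    have h2 : ∑ j ∈ range φt, ((d j - p ^ c * rem.coeff j : ℤ) : K) * ζ ^ j
        = (∑ j ∈ range φt, (d j : K) * ζ ^ j)
          - ∑ j ∈ range φt, (p : K) ^ c * ((rem.coeff j : K) * ζ ^ j) := by
      rw [← Finset.sum_sub_distrib]
      apply Finset.sum_congr rfl
      intro j _
      push_cast
      ring
    rw [h2, ← Finset.mul_sum, h1, sub_self]
  -- linear independence of low powers of ζ
  have hzero : ∀ j < φt, d j - p ^ c * rem.coeff j = 0 := by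
    intro j hj
    set z : ℕ → ℤ := fun j => d j - p ^ c * rem.coeff j with hz
    set Q : ℚ[X] := ∑ i ∈ range φt, Polynomial.C ((z i : ℚ)) * Polynomial.X ^ i with hQ
    have haevalQ : Polynomial.aeval ζ Q = 0 := by
      rw [hQ, map_sum]
      have h3 : ∀ i ∈ range φt, Polynomial.aeval ζ (Polynomial.C ((z i : ℚ)) * Polynomial.X ^ i)
          = ((z i : ℤ) : K) * ζ ^ i := by
        intro i _
        rw [map_mul, map_pow, Polynomial.aeval_X, Polynomial.aeval_C]
        congr 1
        rw [show ((z i : ℚ)) = (((z i : ℤ) : ℚ)) from rfl, map_intCast]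
      rw [Finset.sum_congr rfl h3]
      exact hrel
    have hQ0 : Q = 0 := by
      by_contra hQ0
      have hdvd : minpoly ℚ ζ ∣ Q := minpoly.dvd ℚ ζ haevalQ
      have h4 : (minpoly ℚ ζ).natDegree ≤ Q.natDegree :=
        Polynomial.natDegree_le_of_dvd hdvd hQ0
      have h5 : Q.natDegree < φt := by
        have h6 : Q.natDegree ≤ φt - 1 := by
          rw [hQ]
          apply Polynomial.natDegree_sum_le_of_forall_le
          intro i hi
          calc (Polynomial.C ((z i : ℚ)) * Polynomial.X ^ i).natDegree
              ≤ i := by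
                apply le_trans (Polynomial.natDegree_C_mul_le _ _)
                rw [Polynomial.natDegree_X_pow]
          _ ≤ φt - 1 := by have := mem_range.mp hi; omega
        omega
      rw [← hminq] at h4
      have h7 : (cyclotomic (p ^ e) ℚ).natDegree = φt := by
        rw [natDegree_cyclotomic, htot]
      omega
    have h8 : Q.coeff j = (z j : ℚ) := by
      rw [hQ, Polynomial.finset_sum_coeff]
      rw [Finset.sum_eq_single j]
      · rw [Polynomial.coeff_C_mul, Polynomial.coeff_X_pow, if_pos rfl, mul_one]
      · intro i _ hij
        rw [Polynomial.coeff_C_mul, Polynomial.coeff_X_pow,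
          if_neg (fun hh => hij hh.symm), mul_zero]
      · intro hjm
        exact absurd (mem_range.mpr hj) hjm
    rw [hQ0] at h8
    have h10 : (z j : ℚ) = 0 := by simpa using h8.symm
    have h11 : z j = 0 := by exact_mod_cast h10
    rw [hz] at h11
    push_cast at h11 ⊢
    linarith [h11]
  -- divisibility for indices below φt
  have hdvdj : ∀ j < φt, (p : ℤ) ^ c ∣ A j - A (φt + j % a) := by
    intro j hj
    have h12 := hzero j hj
    refine ⟨rem.coeff j, ?_⟩
    rw [hd] at h12
    push_cast at h12 ⊢
    linarith [h12]
  -- periodicity of A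
  have hper : ∀ k r, A (r + p ^ e * k) = A r := by
    intro k
    induction k with
    | zero => simp
    | succ k ih =>
      intro r
      rw [Nat.mul_succ, ← Nat.add_assoc, hA, ih]
  have hmodA : ∀ r, A r = A (r % p ^ e) := by
    intro r
    conv_lhs => rw [← Nat.mod_add_div r (p ^ e)]
    exact hper _ _
  -- congruence to the anchor
  have hanchor : ∀ r, (p : ℤ) ^ c ∣ A r - A (φt + r % a) := by
    intro r
    set r0 := r % p ^ e with hr0
    have hr0lt : r0 < p ^ e := Nat.mod_lt _ hpe0
    have hr0m : r0 % a = r % a := by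
      rw [hr0]
      apply Nat.mod_mod_of_dvd
      rw [haa]
      exact pow_dvd_pow p (by omega)
    rcases lt_or_ge r0 φt with hlt | hge
    · have h13 := hdvdj r0 hlt
      rw [hmodA r, ← hr0m]
      exact h13
    · have hs : φt + (r0 - φt) = r0 := by omega
      have hslt : r0 - φt < a := by omega
      have h9 : r0 % a = r0 - φt := by
        have h14 : r0 - φt + φt = r0 := by omega
        calc r0 % a = (r0 - φt + φt) % a := by rw [h14]
        _ = (r0 - φt + a * (p - 1)) % a := by rw [← hφt]
        _ = (r0 - φt) % a := by rw [Nat.add_mul_mod_self_left]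
        _ = r0 - φt := Nat.mod_eq_of_lt hslt
      rw [hmodA r, ← hr0m, h9, hs]
      simp [hr0]
  -- conclusion
  intro r k
  have h1 := hanchor r
  have h2 := hanchor (r + p ^ (e - 1) * k)
  have h3 : (r + p ^ (e - 1) * k) % a = r % a := by
    rw [haa]
    exact Nat.add_mul_mod_self_left r (p ^ (e-1)) k
  rw [h3] at h2
  have := dvd_sub h2 h1
  simpa using this

/-- The combinatorial descent: from congruences between partial sums at all levels,
deduce the `p^m` congruence. -/
lemma my_descent (p c m : ℕ) (hp : 0 < p) (hm : 1 ≤ m) (hmc : m ≤ c) (S : ℕ → ℕ → ℤ)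
    (Hstep : ∀ e r, 1 ≤ e → e ≤ c →
      S (e - 1) r = ∑ v ∈ range p, S e (r + p ^ (e - 1) * v))
    (Hc : ∀ e, 1 ≤ e → e ≤ c → ∀ r k, (p : ℤ) ^ c ∣ S e (r + p ^ (e - 1) * k) - S e r) :
    (p : ℤ) ^ m ∣ S c (p ^ (m - 1)) - S c 0 := by
  set q : ℕ := p ^ (m - 1) with hq
  set δ : ℕ → ℤ := fun e => S e q - S e 0 with hδ
  -- one descent step
  have step : ∀ e, 1 ≤ e → e ≤ c → (p : ℤ) ^ c ∣ δ (e - 1) - p * δ e := by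
    intro e he1 hec
    have h1 := Hstep e q he1 hec
    have h2 := Hstep e 0 he1 hec
    have h3 : δ (e - 1) - p * δ e
        = ∑ v ∈ range p, ((S e (q + p ^ (e - 1) * v) - S e q)
            - (S e (0 + p ^ (e - 1) * v) - S e 0)) := by
      rw [hδ]
      simp only
      rw [h1, h2, Finset.sum_sub_distrib, Finset.sum_sub_distrib, Finset.sum_sub_distrib,
        Finset.sum_const, Finset.sum_const, card_range]
      push_cast
      ring
    rw [h3]
    exact Finset.dvd_sum fun v _ =>
      dvd_sub (Hc e he1 hec q v) (Hc e he1 hec 0 v)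
  -- iterate: δ m ≡ p^i δ (m+i)
  have iter : ∀ i, m + i ≤ c → (p : ℤ) ^ c ∣ δ m - p ^ i * δ (m + i) := by
    intro i
    induction i with
    | zero => intro _; simp
    | succ i ih =>
      intro hic
      have h4 := ih (by omega)
      have h5 := step (m + i + 1) (by omega) (by omega)
      have h6 : m + i + 1 - 1 = m + i := by omega
      rw [h6] at h5
      have h7 : δ m - p ^ (i + 1) * δ (m + (i + 1))
          = (δ m - p ^ i * δ (m + i)) + p ^ i * (δ (m + i) - p * δ (m + i + 1)) := by
        have : m + (i + 1) = m + i + 1 := by omega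
        rw [this]
        ring
      rw [h7]
      exact dvd_add h4 (Dvd.dvd.mul_left h5 _)
  have h8 := iter (c - m) (by omega)
  have h9 : (p : ℤ) ^ c ∣ δ m := by
    have h10 := Hc m hm hmc 0 1
    have h11 : 0 + p ^ (m - 1) * 1 = q := by rw [hq]; omega
    rw [h11] at h10
    simpa [hδ] using h10
  have h12 : (p : ℤ) ^ c ∣ (p : ℤ) ^ (c - m) * δ c := by
    have h13 : m + (c - m) = c := by omega
    rw [h13] at h8
    have := dvd_sub h9 h8
    simpa using this
  have h14 : (p : ℤ) ^ c = (p : ℤ) ^ (c - m) * (p : ℤ) ^ m := by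
    rw [← pow_add]
    congr 1
    omega
  rw [h14] at h12
  have hpne : ((p : ℤ)) ^ (c - m) ≠ 0 := pow_ne_zero _ (by exact_mod_cast hp.ne')
  exact (mul_dvd_mul_iff_left hpne).mp h12

/-- The key congruence for a single representation with integer character values. -/
lemma my_key_step {G : Type} [Group G] [Fintype G] (p m : ℕ) (hp : p.Prime) (hm : 1 ≤ m)
    (g h : G) (hcm : Commute g h) (c : ℕ) (hord : orderOf h = p ^ c)
    (V : FDRep ℂ G) (hintV : ∀ x : G, ∃ z : ℤ, V.character x = (z : ℂ))
    (z1 z2 : ℤ) (h1 : V.character g = (z1 : ℂ))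
    (h2 : V.character (g * h ^ p ^ (m - 1)) = (z2 : ℂ)) :
    (p : ℤ) ^ m ∣ z2 - z1 := by
  have hp2 : 2 ≤ p := hp.two_le
  have hf : ∀ t : ℕ, ∃ z : ℤ, V.character (g * h ^ t) = (z : ℂ) := fun t => hintV _
  choose f hfspec using hf
  rcases lt_or_ge c m with hcm' | hmc
  · -- trivial case : h ^ (p ^ (m-1)) = 1
    have hdvd : orderOf h ∣ p ^ (m - 1) := by
      rw [hord]
      exact pow_dvd_pow p (by omega)
    have hone : h ^ p ^ (m - 1) = 1 := orderOf_dvd_iff_pow_eq_one.mp hdvd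
    rw [hone, mul_one, h1] at h2
    have : z1 = z2 := by exact_mod_cast h2
    simp [this]
  · -- main case
    set n : ℕ := p ^ c with hn
    have hn0 : 0 < n := pow_pos (by omega) _
    have hhn : h ^ n = 1 := by rw [← hord]; exact pow_orderOf_eq_one h
    -- periodicity of f
    have hfper : ∀ t, f (t + n) = f t := by
      intro t
      have e1 := hfspec (t + n)
      have e2 := hfspec t
      rw [pow_add, hhn, mul_one] at e1
      have e3 := e2.symm.trans e1
      exact_mod_cast e3.symm
    -- the partial sums
    set S : ℕ → ℕ → ℤ := fun e r => ∑ w ∈ range (p ^ (c - e)), f (r + p ^ e * w) with hS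
    -- periodicity of S e
    have hSper : ∀ e, e ≤ c → ∀ r, S e (r + p ^ e) = S e r := by
      intro e hec r
      rw [hS]
      simp only
      have hG : ∀ w, f (r + p ^ e * (w + p ^ (c - e))) = f (r + p ^ e * w) := by
        intro w
        rw [Nat.mul_add, ← Nat.add_assoc]
        have : p ^ e * p ^ (c - e) = n := by rw [← pow_add]; congr 1; omega
        rw [this, hfper]
      have h3 : ∀ w, f (r + p ^ e + p ^ e * w) = f (r + p ^ e * (1 + w)) := by
        intro w
        congr 1
        ring
      calc ∑ w ∈ range (p ^ (c - e)), f (r + p ^ e + p ^ e * w)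
          = ∑ w ∈ range (p ^ (c - e)), f (r + p ^ e * (1 + w)) :=
            Finset.sum_congr rfl fun w _ => h3 w
        _ = ∑ w ∈ range (p ^ (c - e)), f (r + p ^ e * w) := by
            have := my_sum_shift (fun w => f (r + p ^ e * w)) (p ^ (c - e))
              (fun u => by simpa using hG u) 1
            simpa using this
    -- the congruence conditions at every level
    have H : ∀ e, 1 ≤ e → e ≤ c → ∀ r k,
        (p : ℤ) ^ c ∣ S e (r + p ^ (e - 1) * k) - S e r := by
      intro e he1 hec
      -- the cyclotomic field
      haveI : Fact p.Prime := ⟨hp⟩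
      set pp : ℕ+ := ⟨p, by omega⟩ with hpp
      set ν : ℕ+ := pp ^ e with hν
      have hνe : ((ν : ℕ+) : ℕ) = p ^ e := by rw [hν, PNat.pow_coe]; rfl
      set Kf := CyclotomicField ν ℚ with hKf
      haveI : IsCyclotomicExtension {(ν : ℕ)} ℚ Kf := CyclotomicField.isCyclotomicExtension _ _
      set ζ : Kf := IsCyclotomicExtension.zeta ν ℚ Kf with hζdef
      have hζν : IsPrimitiveRoot ζ (ν : ℕ) := IsCyclotomicExtension.zeta_spec ν ℚ Kf
      have hζ : IsPrimitiveRoot ζ (p ^ e) := by convert hζν using 1; exact hνe.symm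
      haveI : FiniteDimensional ℚ Kf :=
        IsCyclotomicExtension.finiteDimensional {(ν : ℕ)} ℚ Kf
      let emb : Kf →ₐ[ℚ] ℂ := IsAlgClosed.lift
      have hembinj : Function.Injective emb := emb.toRingHom.injective
      set η : ℂ := emb ζ with hη
      have hηprim : IsPrimitiveRoot η (p ^ e) := hζ.map_of_injective hembinj
      have hηn : η ^ n = 1 := by
        have : η ^ (p ^ e) = 1 := hηprim.pow_eq_one
        calc η ^ n = (η ^ p ^ e) ^ (p ^ (c - e)) := by
              rw [← pow_mul, ← pow_add, hn]
              congr 1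
              congr 1
              omega
        _ = 1 := by rw [this, one_pow]
      -- integrality from the representation
      have hB := my_beta_integral V g h hcm n hn0 hhn η hηn
      -- grouping the sum
      have hgroup : ∑ t ∈ range n, η ^ t * V.character (g * h ^ t)
          = ∑ r ∈ range (p ^ e), ((S e r : ℤ) : ℂ) * η ^ r := by
        have hfactor : n = p ^ e * p ^ (c - e) := by
          rw [← pow_add, hn]
          congr 1
          omega
        rw [hfactor, my_sum_range_mul (fun t => η ^ t * V.character (g * h ^ t))]
        rw [Finset.sum_comm]
        apply Finset.sum_congr rfl
        intro r _
        rw [hS]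
        simp only
        push_cast
        rw [Finset.sum_mul]
        apply Finset.sum_congr rfl
        intro w _
        rw [hfspec (r + p ^ e * w)]
        have : η ^ (r + p ^ e * w) = η ^ r := by
          rw [pow_add, pow_mul, hηprim.pow_eq_one, one_pow, mul_one]
        rw [this]
        ring
      -- transfer integrality to Kf
      set Y : Kf := ((p : Kf) ^ c)⁻¹ * ∑ r ∈ range (p ^ e), (S e r : Kf) * ζ ^ r with hY
      have hembY : emb Y = (n : ℂ)⁻¹ * ∑ t ∈ range n, η ^ t * V.character (g * h ^ t) := by
        rw [hgroup, hY, map_mul, map_inv₀, map_pow, map_sum]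
        congr 1
        · rw [hn]
          push_cast
          congr 1
          rw [map_natCast]
        · apply Finset.sum_congr rfl
          intro r _
          rw [map_mul, map_pow, map_intCast]
      have hYint : IsIntegral ℤ Y := by
        have h5 : IsIntegral ℤ (emb.toRingHom.toIntAlgHom Y) := by
          show IsIntegral ℤ (emb Y)
          rw [hembY]
          exact hB
        exact (isIntegral_algHom_iff emb.toRingHom.toIntAlgHom hembinj).mp h5
      -- the adjoin property
      have hadj : ∀ y : Kf, IsIntegral ℤ y → ∃ q : ℤ[X], Polynomial.aeval ζ q = y := by
        intro y hy
        have hic : IsIntegralClosure (Algebra.adjoin ℤ ({ζ} : Set Kf)) ℤ Kf := by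
          have hζν' : IsPrimitiveRoot ζ ((pp ^ e : ℕ+) : ℕ) := by rwa [← hν]
          haveI : Fact (Nat.Prime ((pp : ℕ+) : ℕ)) := ⟨hp⟩
          haveI : IsCyclotomicExtension {(pp : ℕ) ^ e} ℚ Kf := by
            rw [← PNat.pow_coe, ← hν]; infer_instance
          exact IsCyclotomicExtension.Rat.isIntegralClosure_adjoin_singleton_of_prime_pow (hcycl := this) hζν'
        obtain ⟨x, hx⟩ := hic.isIntegral_iff.mp hy
        have hxm : (x : Kf) ∈ (Polynomial.aeval ζ : ℤ[X] →ₐ[ℤ] Kf).range := by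
          rw [← Algebra.adjoin_singleton_eq_range_aeval]
          exact x.2
        obtain ⟨q, hq⟩ := hxm
        exact ⟨q, by exact hq.trans hx⟩
      -- apply the congruence extraction
      exact my_coeff_congr p e c hp he1 ζ hζ hadj (S e)
        (fun r => hSper e hec r) hYint
    -- step identity for the descent
    have Hstep : ∀ e r, 1 ≤ e → e ≤ c →
        S (e - 1) r = ∑ v ∈ range p, S e (r + p ^ (e - 1) * v) := by
      intro e r he1 hec
      rw [hS]
      simp only
      have h6 : c - (e - 1) = (c - e) + 1 := by omega
      have h7 : p ^ ((c - e) + 1) = p * p ^ (c - e) := by rw [pow_succ]; ring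
      rw [h6, h7, my_sum_range_mul (fun w => f (r + p ^ (e - 1) * w))]
      rw [Finset.sum_comm]
      apply Finset.sum_congr rfl
      intro v _
      apply Finset.sum_congr rfl
      intro w _
      congr 1
      have h8 : p ^ (e - 1) * p = p ^ e := by
        rw [← pow_succ]
        congr 1
        omega
      calc r + p ^ (e - 1) * (v + p * w)
          = r + p ^ (e - 1) * v + (p ^ (e - 1) * p) * w := by ring
        _ = r + p ^ (e - 1) * v + p ^ e * w := by rw [h8]
    -- the descent
    have hfinal := my_descent p c m (by omega) hm hmc S Hstep H
    -- identify S c with f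
    have hSc : ∀ r, S c r = f r := by
      intro r
      rw [hS]
      simp
    rw [hSc, hSc] at hfinal
    -- f (p^(m-1)) = z2, f 0 = z1
    have hf0 : f 0 = z1 := by
      have := hfspec 0
      rw [pow_zero, mul_one, h1] at this
      exact_mod_cast this.symm
    have hfq : f (p ^ (m - 1)) = z2 := by
      have := hfspec (p ^ (m - 1))
      rw [h2] at this
      exact_mod_cast this.symm
    rw [hf0, hfq] at hfinal
    exact hfinal

/-- Let `G` be a finite group and `p` a prime.  Suppose `g ∼_m g'` where
`∼_m` is the equivalence relation generated by conjugation and `g ∼ g * h^(p^(m-1))`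
whenever `h` commutes with `g` and has `p`-power order.  Then for every virtual character
`χ` of `G` with values in `ℤ` (an integer linear combination of characters of complex
representations whose values are rational integers), `χ g ≡ χ g' (mod p^m)`. -/
theorem stmt_14 (p m : ℕ) (hp : p.Prime) (hm : 1 ≤ m)
    (G : Type) [Group G] [Fintype G] (g g' : G)
    (hrel : Relation.EqvGen
      (fun a b : G => IsConj a b ∨
        ∃ h : G, Commute a h ∧ (∃ c : ℕ, orderOf h = p ^ c) ∧ b = a * h ^ (p ^ (m - 1)))
      g g')
    (χ : G → ℤ) (r : ℕ) (F : Fin r → FDRep ℂ G) (c : Fin r → ℤ)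
    (hint : ∀ i : Fin r, ∀ x : G, ∃ z : ℤ, (F i).character x = (z : ℂ))
    (hχ : ∀ x : G, (χ x : ℂ) = ∑ i : Fin r, (c i : ℂ) * (F i).character x) :
    (p : ℤ) ^ m ∣ χ g - χ g' := by
  induction hrel with
  | rel a b hab =>
    rcases hab with hconj | ⟨h, hcomm, ⟨c', hc'⟩, rfl⟩
    · -- conjugation case
      obtain ⟨u, hu⟩ := hconj
      have hu' : (u : G) * a = b * (u : G) := hu.eq
      have hb : b = (u : G) * a * ((u : G))⁻¹ := by
        rw [hu']
        group
      have hval : ∀ i : Fin r, (F i).character a = (F i).character b := by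
        intro i
        rw [hb, FDRep.char_conj]
      have hcast : (χ a : ℂ) = (χ b : ℂ) := by
        rw [hχ a, hχ b]
        exact Finset.sum_congr rfl fun i _ => by rw [hval i]
      have : χ a = χ b := by exact_mod_cast hcast
      simp [this]
    · -- generator case
      choose z hz using fun i : Fin r => hint i
      have hdiff : ∀ i : Fin r,
          (p : ℤ) ^ m ∣ z i (a * h ^ p ^ (m - 1)) - z i a := fun i =>
        my_key_step p m hp hm a h hcomm c' hc' (F i) (hint i)
          (z i a) (z i (a * h ^ p ^ (m - 1))) (hz i a) (hz i _)
      have hsum : χ a - χ (a * h ^ p ^ (m - 1))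
          = ∑ i : Fin r, c i * (z i a - z i (a * h ^ p ^ (m - 1))) := by
        have hcast : ((χ a - χ (a * h ^ p ^ (m - 1)) : ℤ) : ℂ)
            = ((∑ i : Fin r, c i * (z i a - z i (a * h ^ p ^ (m - 1))) : ℤ) : ℂ) := by
          push_cast
          rw [hχ a, hχ (a * h ^ p ^ (m - 1))]
          rw [← Finset.sum_sub_distrib]
          apply Finset.sum_congr rfl
          intro i _
          rw [hz i a, hz i (a * h ^ p ^ (m - 1))]
          ring
        exact_mod_cast hcast
      rw [hsum]
      apply Finset.dvd_sum
      intro i _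
      have h1 : c i * (z i a - z i (a * h ^ p ^ (m - 1)))
          = (-(c i)) * (z i (a * h ^ p ^ (m - 1)) - z i a) := by ring
      rw [h1]
      exact Dvd.dvd.mul_left (hdiff i) _
  | refl a => simp
  | symm a b _ ih =>
    have heq : χ b - χ a = -(χ a - χ b) := by ring
    rw [heq]
    exact dvd_neg.mpr ih
  | trans a b c' _ _ ih1 ih2 =>
    have : χ a - χ c' = (χ a - χ b) + (χ b - χ c') := by ring
    rw [this]
    exact dvd_add ih1 ih2
end
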